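/- arXiv:1308.3933 — 5 statements merged into one kernel-verified Lean document; each statement's English description precedes it below -/
import Mathlib

section
/- (John–Nirenberg lemma) There exists a positive constant A, depending only on the doubling constant c_D, such that for every ball B ⊂ X and every locally integrable function f that is of bounded mean oscillation on 5B (i.e. ‖f‖_* = sup ⨍_{B'} |f − f_{B'}| dμ < ∞, the supremum taken over all balls B' ⊂ 5B) and for every λ > 0, μ({x ∈ B : |f(x) − f_B| > λ}) ≤ 2 μ(B) exp(−A λ / ‖f‖_*). -/
open MeasureTheory Metric ENNReal

section Defs

variable {X : Type*} [MetricSpace X] [MeasurableSpace X]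

/-- The doubling condition from the paper: `μ` is nontrivial and finite on balls, and
`μ(B(x,2r)) ≤ c_D μ(B(y,r))` whenever `B(x,2r) ∩ B(y,r) ≠ ∅`. -/
def IsDoublingWith (μ : Measure X) (cD : ℝ) : Prop :=
  1 < cD ∧
  (∀ (x : X) (r : ℝ), 0 < r → 0 < μ (ball x r) ∧ μ (ball x r) < ⊤) ∧
  ∀ (x y : X) (r : ℝ), 0 < r → (ball x (2 * r) ∩ ball y r).Nonempty →
    μ (ball x (2 * r)) ≤ ENNReal.ofReal cD * μ (ball y r)

/-- Mean oscillation of `f` over the ball `B(x,r)`: `⨍_B |f - f_B| dμ`. -/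
noncomputable def avgOsc (μ : Measure X) (f : X → ℝ) (x : X) (r : ℝ) : ℝ :=
  ⨍ y in ball x r, |f y - ⨍ z in ball x r, f z ∂μ| ∂μ

/-- The set of mean oscillations of `f` over all balls. -/
def bmoSet (μ : Measure X) (f : X → ℝ) : Set ℝ :=
  {a | ∃ x r, 0 < r ∧ a = avgOsc μ f x r}

/-- `f ∈ BMO(X)`: locally integrable with uniformly bounded mean oscillations. -/
def MemBMO (μ : Measure X) (f : X → ℝ) : Prop :=
  LocallyIntegrable f μ ∧ BddAbove (bmoSet μ f)

/-- The BMO seminorm `‖f‖_* = sup_B ⨍_B |f - f_B| dμ`. -/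
noncomputable def bmoNorm (μ : Measure X) (f : X → ℝ) : ℝ :=
  sSup (bmoSet μ f)

end Defs

/-- The BMO seminorm of `f` localized to balls contained in `U`. -/
noncomputable def bmoNormIn {X : Type*} [MetricSpace X] [MeasurableSpace X]
    (μ : Measure X) (f : X → ℝ) (U : Set X) : ℝ :=
  sSup {a | ∃ x r, 0 < r ∧ ball x r ⊆ U ∧ a = avgOsc μ f x r}

open Set Filter Topology

namespace JN

variable {X : Type} [MetricSpace X] [MeasurableSpace X]
variable {μ : Measure X} {cD : ℝ}

structure DblData (μ : Measure X) (cD : ℝ) : Prop where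
  one_lt : 1 < cD
  pos : ∀ (x : X) (r : ℝ), 0 < r → 0 < μ (ball x r)
  lt_top : ∀ (x : X) (r : ℝ), 0 < r → μ (ball x r) < ⊤
  dbl : ∀ (x : X) (r : ℝ), 0 < r → μ (ball x (2 * r)) ≤ ENNReal.ofReal cD * μ (ball x r)

namespace DblData

variable (hD : DblData μ cD)
include hD

lemma cD_pos : 0 < cD := lt_trans one_pos hD.one_lt

lemma dbl_pow (x : X) (r : ℝ) (hr : 0 < r) (k : ℕ) :
    μ (ball x (2 ^ k * r)) ≤ ENNReal.ofReal (cD ^ k) * μ (ball x r) := by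
  induction k with
  | zero => simp
  | succ k ih =>
      have h1 : (2 : ℝ) ^ (k + 1) * r = 2 * (2 ^ k * r) := by ring
      have h2 : 0 < (2 : ℝ) ^ k * r := by positivity
      calc μ (ball x (2 ^ (k + 1) * r)) = μ (ball x (2 * (2 ^ k * r))) := by rw [h1]
        _ ≤ ENNReal.ofReal cD * μ (ball x (2 ^ k * r)) := hD.dbl x _ h2
        _ ≤ ENNReal.ofReal cD * (ENNReal.ofReal (cD ^ k) * μ (ball x r)) := by
            exact mul_le_mul_right ih _
        _ = ENNReal.ofReal (cD ^ (k + 1)) * μ (ball x r) := by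
            rw [← mul_assoc, ← ENNReal.ofReal_mul hD.cD_pos.le, pow_succ, mul_comm (cD ^ k) cD]

lemma meas_le_of_le_pow (x : X) {r r' : ℝ} (hr : 0 < r) (k : ℕ) (h : r' ≤ 2 ^ k * r) :
    μ (ball x r') ≤ ENNReal.ofReal (cD ^ k) * μ (ball x r) :=
  le_trans (measure_mono (ball_subset_ball h)) (hD.dbl_pow x r hr k)

lemma toReal_le_of_le_pow (x : X) {r r' : ℝ} (hr : 0 < r) (k : ℕ) (h : r' ≤ 2 ^ k * r) :
    (μ (ball x r')).toReal ≤ cD ^ k * (μ (ball x r)).toReal := by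
  have h1 := hD.meas_le_of_le_pow x hr k h
  have h2 : (ENNReal.ofReal (cD ^ k) * μ (ball x r)).toReal = cD ^ k * (μ (ball x r)).toReal := by
    rw [ENNReal.toReal_mul, ENNReal.toReal_ofReal (pow_nonneg hD.cD_pos.le k)]
  calc (μ (ball x r')).toReal ≤ (ENNReal.ofReal (cD ^ k) * μ (ball x r)).toReal := by
        apply ENNReal.toReal_mono _ h1
        exact ENNReal.mul_ne_top ENNReal.ofReal_ne_top (hD.lt_top x r hr).ne
    _ = cD ^ k * (μ (ball x r)).toReal := h2

lemma toReal_pos (x : X) {r : ℝ} (hr : 0 < r) : 0 < (μ (ball x r)).toReal :=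
  ENNReal.toReal_pos (hD.pos x r hr).ne' (hD.lt_top x r hr).ne

end DblData

lemma abs_setAverage_sub_le {S : Set X} (hS0 : μ S ≠ 0) (hStop : μ S ≠ ⊤)
    {g : X → ℝ} (hg : IntegrableOn g S μ) (c : ℝ) :
    |(⨍ z in S, g z ∂μ) - c| ≤ ⨍ z in S, |g z - c| ∂μ := by
  have hμS : 0 < (μ S).toReal := ENNReal.toReal_pos hS0 hStop
  have hconst : IntegrableOn (fun _ : X => c) S μ := by
    exact integrableOn_const hStop
  have h1 : ⨍ z in S, g z ∂μ - c = ⨍ z in S, (g z - c) ∂μ := by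
    rw [setAverage_eq, setAverage_eq, integral_sub hg hconst, setIntegral_const,
      smul_sub, smul_smul, inv_mul_cancel₀ (a := μ.real S) hμS.ne', one_smul]
  rw [h1, setAverage_eq, setAverage_eq]
  rw [smul_eq_mul, smul_eq_mul, abs_mul, abs_of_nonneg (by positivity)]
  apply mul_le_mul_of_nonneg_left _ (by positivity)
  simpa using norm_integral_le_integral_norm (μ := μ.restrict S) (f := fun z => g z - c)

lemma setAverage_le_of_subset {S T : Set X} (hST : S ⊆ T) (hS0 : μ S ≠ 0) (hTtop : μ T ≠ ⊤)
    {g : X → ℝ} (hg : IntegrableOn g T μ) (hgnn : ∀ x, 0 ≤ g x) :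
    ⨍ z in S, g z ∂μ ≤ ((μ T).toReal / (μ S).toReal) * ⨍ z in T, g z ∂μ := by
  have hStop : μ S ≠ ⊤ := fun h => hTtop (top_le_iff.1 (h ▸ measure_mono hST))
  have hμS : 0 < (μ S).toReal := ENNReal.toReal_pos hS0 hStop
  have hT0 : μ T ≠ 0 := fun h => hS0 (le_antisymm (h ▸ measure_mono hST) zero_le)
  have hμT : 0 < (μ T).toReal := ENNReal.toReal_pos hT0 hTtop
  have hint : ∫ z in S, g z ∂μ ≤ ∫ z in T, g z ∂μ := by
    apply setIntegral_mono_set hg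
    · exact Filter.Eventually.of_forall hgnn
    · exact HasSubset.Subset.eventuallyLE hST
  rw [setAverage_eq, setAverage_eq, smul_eq_mul, smul_eq_mul]
  have key : (μ T).toReal / (μ S).toReal * ((μ T).toReal⁻¹ * ∫ z in T, g z ∂μ)
      = (μ S).toReal⁻¹ * ∫ z in T, g z ∂μ := by
    field_simp
  rw [measureReal_def, measureReal_def]
  rw [key]
  exact mul_le_mul_of_nonneg_left hint (by positivity)

lemma totallyBounded_ball [OpensMeasurableSpace X] (hD : DblData μ cD) (p : X) (R : ℝ)
    (hR : 0 < R) : TotallyBounded (ball p R) := by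
  rw [Metric.totallyBounded_iff]
  by_contra hcon
  push_neg at hcon
  obtain ⟨ε, hε, hno⟩ := hcon
  haveI : Std.Symm (fun a b : X => ε ≤ dist a b) := ⟨fun a b h => by rwa [dist_comm]⟩
  obtain ⟨u, hu, hsep⟩ := exists_seq_of_forall_finset_exists' (fun z => z ∈ ball p R)
    (fun a b => ε ≤ dist a b) (fun s _ => by
      obtain ⟨z, hz1, hz2⟩ := not_subset.1 (fun hsub => (hno ↑s s.finite_toSet hsub))
      refine ⟨z, hz1, fun x hx => ?_⟩
      simp only [mem_iUnion, exists_prop, not_exists, not_and, Finset.mem_coe] at hz2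
      have := hz2 x hx
      rw [mem_ball, not_lt] at this
      rwa [dist_comm])
  have hsymm : ∀ i j : ℕ, i ≠ j → ε ≤ dist (u i) (u j) := by
    intro i j hij
    rcases hij.lt_or_gt with h | h
    · exact hsep h.ne
    · have := hsep h.ne; rwa [dist_comm]
  obtain ⟨m, hm⟩ := pow_unbounded_of_one_lt (4 * R / ε) (one_lt_two : (1 : ℝ) < 2)
  set δ := μ (ball p R) / ENNReal.ofReal (cD ^ m) with hδ
  have hofr : ENNReal.ofReal (cD ^ m) ≠ 0 := by
    rw [Ne, ENNReal.ofReal_eq_zero, not_le]; exact pow_pos hD.cD_pos m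
  have hδpos : 0 < δ := ENNReal.div_pos (hD.pos p R hR).ne' ENNReal.ofReal_ne_top
  have hδtop : δ ≠ ⊤ := (ENNReal.div_lt_top (hD.lt_top p R hR).ne hofr).ne
  have hlow : ∀ i : ℕ, δ ≤ μ (ball (u i) (ε / 2)) := by
    intro i
    rw [hδ, ENNReal.div_le_iff hofr ENNReal.ofReal_ne_top]
    calc μ (ball p R) ≤ μ (ball (u i) (2 * R)) := by
          apply measure_mono
          apply ball_subset_ball'
          have := mem_ball.1 (hu i)
          rw [dist_comm] at this
          linarith
      _ ≤ ENNReal.ofReal (cD ^ m) * μ (ball (u i) (ε / 2)) := by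
          apply hD.meas_le_of_le_pow (u i) (by positivity) m
          rw [div_lt_iff₀ (by positivity)] at hm
          nlinarith
      _ = μ (ball (u i) (ε / 2)) * ENNReal.ofReal (cD ^ m) := mul_comm _ _
  have hbound : ∀ k : ℕ, (k : ℝ≥0∞) * δ ≤ μ (ball p (R + ε / 2)) := by
    intro k
    have e1 : (k : ℝ≥0∞) * δ = ∑ _i ∈ Finset.range k, δ := by
      rw [Finset.sum_const, Finset.card_range, nsmul_eq_mul]
    have e2 : ∑ _i ∈ Finset.range k, δ ≤ ∑ i ∈ Finset.range k, μ (ball (u i) (ε / 2)) :=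
      Finset.sum_le_sum fun i _ => hlow i
    have e3 : ∑ i ∈ Finset.range k, μ (ball (u i) (ε / 2))
        = μ (⋃ i ∈ Finset.range k, ball (u i) (ε / 2)) := by
      rw [measure_biUnion_finset]
      · intro i _ j _ hij
        apply Metric.ball_disjoint_ball
        rw [← add_div, add_self_div_two]
        exact hsymm i j hij
      · exact fun i _ => measurableSet_ball
    have e4 : μ (⋃ i ∈ Finset.range k, ball (u i) (ε / 2)) ≤ μ (ball p (R + ε / 2)) := by
      apply measure_mono
      apply iUnion₂_subset
      intro i _
      apply ball_subset_ball'
      have := mem_ball.1 (hu i)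
      linarith
    rw [e1]; exact le_trans e2 (le_trans (le_of_eq e3) e4)
  have hfin : μ (ball p (R + ε / 2)) ≠ ⊤ := (hD.lt_top p _ (by positivity)).ne
  have hδr : 0 < δ.toReal := ENNReal.toReal_pos hδpos.ne' hδtop
  obtain ⟨k, hk⟩ := exists_nat_gt ((μ (ball p (R + ε / 2))).toReal / δ.toReal)
  have h2 : (k : ℝ) * δ.toReal ≤ (μ (ball p (R + ε / 2))).toReal := by
    have := ENNReal.toReal_mono hfin (hbound k)
    rwa [ENNReal.toReal_mul, ENNReal.toReal_natCast] at this
  rw [div_lt_iff₀ hδr] at hk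
  linarith

lemma secondCountable [OpensMeasurableSpace X] (hD : DblData μ cD) (p : X) :
    SecondCountableTopology X := by
  have h2 : TopologicalSpace.IsSeparable (univ : Set X) := by
    have hsub : (univ : Set X) ⊆ ⋃ n : ℕ, ball p ((n : ℝ) + 1) := by
      intro z _
      obtain ⟨n, hn⟩ := exists_nat_gt (dist z p)
      exact mem_iUnion.2 ⟨n, by rw [mem_ball]; linarith⟩
    exact (TopologicalSpace.isSeparable_iUnion.2 fun (n : ℕ) =>
      (totallyBounded_ball hD p ((n : ℝ) + 1) (by positivity)).isSeparable).mono hsub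
  have : TopologicalSpace.SeparableSpace X := TopologicalSpace.isSeparable_univ_iff.1 h2
  exact UniformSpace.secondCountable_of_separable X

lemma ldt [BorelSpace X] [SecondCountableTopology X] [IsLocallyFiniteMeasure μ]
    (hD : DblData μ cD)
    {h : X → ℝ} (hint : Integrable h μ) (ρ : ℕ → ℝ) (hρ : ∀ k, 0 < ρ k)
    (hlim : Tendsto ρ atTop (𝓝 0)) :
    ∀ᵐ x ∂μ, Tendsto (fun k => ⨍ w in closedBall x (ρ k), h w ∂μ) atTop (𝓝 (h x)) := by
  have hC : ∀ (x : X) (r : ℝ), 0 < r →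
      μ (closedBall x (3 * r)) ≤ (Real.toNNReal (cD ^ 2)) * μ (closedBall x r) := by
    intro x r hr
    calc μ (closedBall x (3 * r)) ≤ μ (ball x (2 * (2 * r))) :=
          measure_mono (closedBall_subset_ball (by linarith))
      _ ≤ ENNReal.ofReal cD * μ (ball x (2 * r)) := hD.dbl x (2 * r) (by linarith)
      _ ≤ ENNReal.ofReal cD * (ENNReal.ofReal cD * μ (ball x r)) :=
          mul_le_mul_right (hD.dbl x r hr) _
      _ = ENNReal.ofReal (cD ^ 2) * μ (ball x r) := by
          rw [← mul_assoc, ← ENNReal.ofReal_mul hD.cD_pos.le, sq]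
      _ ≤ (Real.toNNReal (cD ^ 2)) * μ (closedBall x r) := by
          rw [ENNReal.ofReal]
          exact mul_le_mul_right (measure_mono ball_subset_closedBall) _
  set v := Vitali.vitaliFamily μ (Real.toNNReal (cD ^ 2))
    (fun x => ((eventually_nhdsWithin_of_forall (s := Set.Ioi (0 : ℝ)) (a := (0 : ℝ))
      (fun r hr => hC x r hr)).frequently)) with hv
  have hmem : ∀ (x : X) (k : ℕ), closedBall x (ρ k) ∈ v.setsAt x := by
    intro x k
    refine ⟨isClosed_closedBall, (nonempty_ball.2 (hρ k)).mono ball_subset_interior_closedBall,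
      ⟨ρ k, Subset.rfl, ?_⟩⟩
    exact hC x (ρ k) (hρ k)
  filter_upwards [v.ae_tendsto_average hint.locallyIntegrable] with x hx
  apply hx.comp
  rw [v.tendsto_filterAt_iff]
  refine ⟨Eventually.of_forall (fun k => hmem x k), fun ε hε => ?_⟩
  filter_upwards [hlim.eventually (gt_mem_nhds hε)] with k hk
  exact closedBall_subset_closedBall hk.le

end JN

noncomputable def jnC3 (cD : ℝ) : ℝ := 2 * (1 + cD) * cD ^ 6

noncomputable def jnK (cD : ℝ) : ℝ := cD * jnC3 cD + cD ^ 2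

lemma jnC3_pos {cD : ℝ} (h : 1 < cD) : 0 < jnC3 cD := by
  have : 0 < cD := lt_trans one_pos h
  unfold jnC3; positivity

lemma jnK_pos {cD : ℝ} (h : 1 < cD) : 0 < jnK cD := by
  have h0 : 0 < cD := lt_trans one_pos h
  have := jnC3_pos h
  unfold jnK; positivity

lemma jnC3_le_jnK {cD : ℝ} (h : 1 < cD) : jnC3 cD ≤ jnK cD := by
  have h0 : 0 < cD := lt_trans one_pos h
  have h1 := jnC3_pos h
  unfold jnK
  nlinarith

namespace JN

variable {X : Type} [MetricSpace X] [MeasurableSpace X]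
variable {μ : Measure X} {cD : ℝ}

set_option maxHeartbeats 2000000 in
lemma claim [BorelSpace X] [SecondCountableTopology X] [IsLocallyFiniteMeasure μ]
    (hD : DblData μ cD)
    (x₀ : X) (r₀ : ℝ) (hr₀ : 0 < r₀) (f : X → ℝ)
    (hf : IntegrableOn f (ball x₀ (5 * r₀)) μ)
    (N : ℝ) (hNpos : 0 < N)
    (hN : ∀ (y : X) (s : ℝ), 0 < s → ball y s ⊆ ball x₀ (5 * r₀) → avgOsc μ f y s ≤ N)
    (n : ℕ) :
    ∀ (y : X) (s : ℝ), 0 < s → ball y (2 * s) ⊆ ball x₀ (5 * r₀) →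
      μ {z ∈ ball y s | (jnC3 cD + n * jnK cD) * N < |f z - ⨍ w in ball y s, f w ∂μ|}
        ≤ (1 / 2 : ℝ≥0∞) ^ n * μ (ball y s) := by
  induction n with
  | zero =>
      intro y s hs _
      simpa using measure_mono (fun z (hz : z ∈ {z ∈ ball y s | _}) => hz.1)
  | succ n IH =>
      intro y s hs h2Q
      classical
      have hcd1 : 1 < cD := hD.one_lt
      have hc0 : 0 < cD := hD.cD_pos
      have hc3 : 0 < jnC3 cD := jnC3_pos hcd1
      have hKpos : 0 < jnK cD := jnK_pos hcd1
      have hKge : cD * jnC3 cD ≤ jnK cD := by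
        unfold jnK; nlinarith [sq_nonneg cD]
      have hKge2 : jnC3 cD + cD ^ 2 ≤ jnK cD := by
        unfold jnK; nlinarith
      set B5 := ball x₀ (5 * r₀) with hB5
      have hB5top : μ B5 ≠ ⊤ := (hD.lt_top x₀ (5 * r₀) (by linarith)).ne
      set Q := ball y s with hQdef
      set Q2 := ball y (2 * s) with hQ2def
      have hQQ2 : Q ⊆ Q2 := ball_subset_ball (by linarith)
      have hQ2B5 : Q2 ⊆ B5 := h2Q
      have hQB5 : Q ⊆ B5 := fun z hz => h2Q (hQQ2 hz)
      have hμQ0 : μ Q ≠ 0 := (hD.pos y s hs).ne'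
      have hμQt : μ Q ≠ ⊤ := (hD.lt_top y s hs).ne
      have hμQ20 : μ Q2 ≠ 0 := (hD.pos y (2 * s) (by linarith)).ne'
      have hμQ2t : μ Q2 ≠ ⊤ := (hD.lt_top y (2 * s) (by linarith)).ne
      set fQ := ⨍ w in Q, f w ∂μ with hfQdef
      set t := jnC3 cD * N with htdef
      have htpos : 0 < t := by positivity
      set lvl := (jnC3 cD + (↑(n + 1) : ℝ) * jnK cD) * N with hlvldef
      set lvlp := (jnC3 cD + (↑n : ℝ) * jnK cD) * N with hlvlpdef
      have habs : ∀ (c : ℝ) (S : Set X), S ⊆ B5 → IntegrableOn (fun z => |f z - c|) S μ := by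
        intro c S hS
        have h1 : IntegrableOn f S μ := hf.mono_set hS
        have h2 : IntegrableOn (fun _ : X => c) S μ := by
          refine integrableOn_const (ne_of_lt ?_)
          exact lt_of_le_of_lt (measure_mono hS) (hD.lt_top x₀ (5 * r₀) (by linarith))
        exact (h1.sub h2).abs
      set g : X → ℝ := fun z => |f z - fQ| with hgdef
      have hgnn : ∀ z, 0 ≤ g z := fun z => abs_nonneg _
      have hgQ2 : IntegrableOn g Q2 μ := habs fQ Q2 hQ2B5
      set h : X → ℝ := Q2.indicator g with hhdef
      have hint : Integrable h μ := hgQ2.integrable_indicator measurableSet_ball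
      have hnn : ∀ z, 0 ≤ h z := fun z => indicator_nonneg (fun w _ => hgnn w) z
      have hoscI : ∀ (b : X) (ρ : ℝ), 0 < ρ → ball b ρ ⊆ B5 →
          ∫ w in ball b ρ, |f w - ⨍ w' in ball b ρ, f w' ∂μ| ∂μ
            ≤ N * (μ (ball b ρ)).toReal := by
        intro b ρ hρ hsub
        have h1 := hN b ρ hρ hsub
        have h2 : 0 < (μ (ball b ρ)).toReal := hD.toReal_pos b hρ
        rw [avgOsc, setAverage_eq, smul_eq_mul] at h1
        have := (inv_mul_le_iff₀ h2).1 h1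
        rw [mul_comm] at this
        exact this
      have havg_nonneg : ∀ (S : Set X) (c : ℝ), 0 ≤ ⨍ z in S, |f z - c| ∂μ := by
        intro S c
        rw [setAverage_eq, smul_eq_mul]
        exact mul_nonneg (by positivity) (integral_nonneg fun z => abs_nonneg _)
      -- |f_{Q2} - f_Q| ≤ cD * N
      have hfQ2v : |(⨍ w in Q2, f w ∂μ) - fQ| ≤ cD * N := by
        have h1 : |fQ - ⨍ w in Q2, f w ∂μ| ≤ ⨍ z in Q, |f z - ⨍ w in Q2, f w ∂μ| ∂μ :=
          abs_setAverage_sub_le hμQ0 hμQt (hf.mono_set hQB5) _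
        have h2 : ⨍ z in Q, |f z - ⨍ w in Q2, f w ∂μ| ∂μ
            ≤ ((μ Q2).toReal / (μ Q).toReal) * ⨍ z in Q2, |f z - ⨍ w in Q2, f w ∂μ| ∂μ :=
          setAverage_le_of_subset hQQ2 hμQ0 hμQ2t (habs _ Q2 hQ2B5) (fun z => abs_nonneg _)
        have h3 : ⨍ z in Q2, |f z - ⨍ w in Q2, f w ∂μ| ∂μ ≤ N := hN y (2 * s) (by linarith) hQ2B5
        have h4 : (μ Q2).toReal ≤ cD * (μ Q).toReal := by
          have := hD.toReal_le_of_le_pow y (r' := 2 * s) hs 1 (by linarith)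
          simpa using this
        have h5 : 0 < (μ Q).toReal := ENNReal.toReal_pos hμQ0 hμQt
        have h6 : 0 ≤ ⨍ z in Q2, |f z - ⨍ w in Q2, f w ∂μ| ∂μ := havg_nonneg _ _
        have h7 : (μ Q2).toReal / (μ Q).toReal ≤ cD := by
          rw [div_le_iff₀ h5]; linarith
        have h8 : 0 ≤ (μ Q2).toReal / (μ Q).toReal := by positivity
        rw [abs_sub_comm]
        calc |fQ - ⨍ w in Q2, f w ∂μ| ≤ ⨍ z in Q, |f z - ⨍ w in Q2, f w ∂μ| ∂μ := h1
          _ ≤ ((μ Q2).toReal / (μ Q).toReal) * ⨍ z in Q2, |f z - ⨍ w in Q2, f w ∂μ| ∂μ := h2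
          _ ≤ cD * N := by nlinarith
      -- total mass of h
      have hF4 : ∫ z in Q2, g z ∂μ ≤ (1 + cD) * N * (μ Q2).toReal := by
        have hconst : IntegrableOn (fun _ : X => cD * N) Q2 μ := by
          exact integrableOn_const hμQ2t
        have hi1 : IntegrableOn (fun z => |f z - ⨍ w in Q2, f w ∂μ| + cD * N) Q2 μ :=
          (habs _ Q2 hQ2B5).add hconst
        have hptwise : ∀ z, g z ≤ |f z - ⨍ w in Q2, f w ∂μ| + cD * N := by
          intro z
          calc g z = |f z - fQ| := rfl
            _ ≤ |f z - ⨍ w in Q2, f w ∂μ| + |(⨍ w in Q2, f w ∂μ) - fQ| := abs_sub_le _ _ _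
            _ ≤ |f z - ⨍ w in Q2, f w ∂μ| + cD * N := by linarith [hfQ2v]
        calc ∫ z in Q2, g z ∂μ
            ≤ ∫ z in Q2, (|f z - ⨍ w in Q2, f w ∂μ| + cD * N) ∂μ :=
              integral_mono hgQ2 hi1 hptwise
          _ = (∫ z in Q2, |f z - ⨍ w in Q2, f w ∂μ| ∂μ) + (μ Q2).toReal * (cD * N) := by
              rw [integral_add (habs _ Q2 hQ2B5) hconst, setIntegral_const, smul_eq_mul, measureReal_def]
          _ ≤ N * (μ Q2).toReal + (μ Q2).toReal * (cD * N) := by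
              have := hoscI y (2 * s) (by linarith) hQ2B5
              linarith
          _ = (1 + cD) * N * (μ Q2).toReal := by ring
      -- dyadic radii
      set ρfun : ℕ → ℝ := fun k => s / 15 * (1 / 2) ^ k with hρdef
      have hρpos : ∀ k, 0 < ρfun k := by intro k; simp only [hρdef]; positivity
      have hρsucc : ∀ k, 2 * ρfun (k + 1) = ρfun k := by
        intro k; simp only [hρdef]; ring
      have hρanti : ∀ i j : ℕ, i ≤ j → ρfun j ≤ ρfun i := by
        intro i j hij; simp only [hρdef]
        have h1 : ((1 : ℝ) / 2) ^ j ≤ (1 / 2) ^ i :=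
          pow_le_pow_of_le_one (by norm_num) (by norm_num) hij
        nlinarith
      have hρle : ∀ k, ρfun k ≤ s / 15 := by
        intro k
        have := hρanti 0 k (Nat.zero_le k)
        simpa [hρdef] using this
      have hρlim : Tendsto ρfun atTop (𝓝 0) := by
        have h1 : Tendsto (fun k : ℕ => ((1 : ℝ) / 2) ^ k) atTop (𝓝 0) :=
          tendsto_pow_atTop_nhds_zero_of_lt_one (by norm_num) (by norm_num)
        have h2 := h1.const_mul (s / 15)
        simpa [hρdef] using h2
      -- top average bound
      have htop : ∀ x ∈ Q, ⨍ w in ball x (ρfun 0), h w ∂μ ≤ t := by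
        intro x hx
        have hρ0 : ρfun 0 = s / 15 := by simp [hρdef]
        have hm15 : 0 < (μ (ball x (s / 15))).toReal := hD.toReal_pos x (by positivity)
        have h1 : ∫ w in ball x (s / 15), h w ∂μ ≤ ∫ w, h w ∂μ :=
          setIntegral_le_integral hint (Eventually.of_forall hnn)
        have h2 : ∫ w, h w ∂μ = ∫ z in Q2, g z ∂μ := integral_indicator measurableSet_ball
        have hsub3 : Q2 ⊆ ball x (3 * s) := by
          apply ball_subset_ball'
          have hd : dist y x < s := by rw [dist_comm]; exact mem_ball.1 hx
          linarith
        have h3 : (μ Q2).toReal ≤ cD ^ 6 * (μ (ball x (s / 15))).toReal := by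
          calc (μ Q2).toReal ≤ (μ (ball x (3 * s))).toReal := by
                apply ENNReal.toReal_mono (hD.lt_top x (3 * s) (by linarith)).ne
                exact measure_mono hsub3
            _ ≤ cD ^ 6 * (μ (ball x (s / 15))).toReal :=
                hD.toReal_le_of_le_pow x (r' := 3 * s) (by positivity) 6 (by norm_num; nlinarith)
        have h4 : ∫ w in ball x (s / 15), h w ∂μ ≤ (1 + cD) * N * (cD ^ 6 * (μ (ball x (s / 15))).toReal) := by
          have h5 : (1 + cD) * N * (μ Q2).toReal ≤ (1 + cD) * N * (cD ^ 6 * (μ (ball x (s / 15))).toReal) := by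
            apply mul_le_mul_of_nonneg_left h3 (by positivity)
          rw [h2] at h1
          linarith [hF4]
        rw [hρ0, setAverage_eq, smul_eq_mul, measureReal_def]
        rw [inv_mul_le_iff₀ hm15]
        have hc6 : (1 : ℝ) ≤ cD ^ 6 := one_le_pow₀ hcd1.le
        calc ∫ w in ball x (s / 15), h w ∂μ
            ≤ (1 + cD) * N * (cD ^ 6 * (μ (ball x (s / 15))).toReal) := h4
          _ ≤ (μ (ball x (s / 15))).toReal * t := by
              rw [htdef]; unfold jnC3
              nlinarith [mul_nonneg (mul_nonneg (mul_nonneg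
                (by linarith : (0:ℝ) ≤ 1 + cD) hNpos.le)
                (by positivity : (0:ℝ) ≤ cD ^ 6)) hm15.le]
      -- the differentiation set
      have hld := ldt hD hint ρfun hρpos hρlim
      set D : Set X :=
        {x | Tendsto (fun k => ⨍ w in closedBall x (ρfun k), h w ∂μ) atTop (𝓝 (h x))} with hDdef
      have hDc : μ Dᶜ = 0 := by
        have : Dᶜ = {x | ¬ Tendsto (fun k => ⨍ w in closedBall x (ρfun k), h w ∂μ) atTop (𝓝 (h x))} := by
          ext z; simp [hDdef]
        rw [this]
        exact ae_iff.1 hld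
      set E := {z ∈ Q | lvl < |f z - fQ|} with hEdef
      -- stopping time existence
      have hkey : ∀ x, x ∈ E ∩ D → ∃ j : ℕ, 1 ≤ j ∧ t < ⨍ w in ball x (ρfun j), h w ∂μ := by
        intro x hx
        obtain ⟨hxE, hxD⟩ := hx
        have hxQ : x ∈ Q := hxE.1
        have hhx : cD * t < h x := by
          have h1 : h x = |f x - fQ| := indicator_of_mem (hQQ2 hxQ) g
          rw [h1]
          refine lt_of_le_of_lt ?_ hxE.2
          rw [htdef, hlvldef]
          push_cast
          have hn0 : (0 : ℝ) ≤ n := Nat.cast_nonneg n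
          nlinarith [mul_nonneg (mul_nonneg hn0 hKpos.le) hNpos.le,
            mul_le_mul_of_nonneg_right hKge hNpos.le, mul_nonneg hc3.le hNpos.le]
        have hev : ∀ᶠ k in atTop, cD * t < ⨍ w in closedBall x (ρfun k), h w ∂μ :=
          hxD.eventually (eventually_gt_nhds hhx)
        obtain ⟨k, hk1, hk2⟩ := (hev.and (eventually_ge_atTop 2)).exists
        refine ⟨k - 1, by omega, ?_⟩
        have hkk : k - 1 + 1 = k := by omega
        have he1 : ρfun (k - 1) = 2 * ρfun k := by rw [← hρsucc (k - 1), hkk]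
        have hcb : closedBall x (ρfun k) ⊆ ball x (ρfun (k - 1)) := by
          rw [he1]; exact closedBall_subset_ball (by linarith [hρpos k])
        have hm1 : 0 < (μ (ball x (ρfun (k - 1)))).toReal := hD.toReal_pos x (hρpos _)
        have hmcb_top : μ (closedBall x (ρfun k)) ≠ ⊤ :=
          (lt_of_le_of_lt (measure_mono hcb) (hD.lt_top x _ (hρpos _))).ne
        have hmcb_0 : μ (closedBall x (ρfun k)) ≠ 0 := by
          intro hzero
          exact (hD.pos x (ρfun k) (hρpos k)).ne'
            (le_antisymm (hzero ▸ measure_mono ball_subset_closedBall) zero_le)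
        have hmcb : 0 < (μ (closedBall x (ρfun k))).toReal := ENNReal.toReal_pos hmcb_0 hmcb_top
        have hI1 : cD * t * (μ (closedBall x (ρfun k))).toReal
            < ∫ w in closedBall x (ρfun k), h w ∂μ := by
          rw [setAverage_eq, smul_eq_mul] at hk1
          have := (lt_inv_mul_iff₀ hmcb).1 hk1
          linarith [this, mul_comm (cD * t) (μ (closedBall x (ρfun k))).toReal]
        have hI2 : ∫ w in closedBall x (ρfun k), h w ∂μ ≤ ∫ w in ball x (ρfun (k - 1)), h w ∂μ :=
          setIntegral_mono_set hint.integrableOn (Eventually.of_forall hnn)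
            (HasSubset.Subset.eventuallyLE hcb)
        have hmm : (μ (ball x (ρfun (k - 1)))).toReal ≤ cD * (μ (ball x (ρfun k))).toReal := by
          have := hD.toReal_le_of_le_pow x (r' := ρfun (k - 1)) (hρpos k) 1 (by rw [he1]; norm_num)
          simpa using this
        have hmb_le : (μ (ball x (ρfun k))).toReal ≤ (μ (closedBall x (ρfun k))).toReal :=
          ENNReal.toReal_mono hmcb_top (measure_mono ball_subset_closedBall)
        rw [setAverage_eq, smul_eq_mul, measureReal_def, lt_inv_mul_iff₀ hm1]
        nlinarith [mul_le_mul_of_nonneg_right hmm htpos.le,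
          mul_le_mul_of_nonneg_left hmb_le (by positivity : (0:ℝ) ≤ cD * t)]
      -- stopping radius
      set jx : X → ℕ := fun x => if hx : x ∈ E ∩ D then Nat.find (hkey x hx) else 1 with hjxdef
      set rfun : X → ℝ := fun x => ρfun (jx x) with hrfundef
      have hr_pos : ∀ x, 0 < rfun x := fun x => hρpos _
      have hr_le15 : ∀ x, rfun x ≤ s / 15 := fun x => hρle _
      have hjx_eq : ∀ x (hx : x ∈ E ∩ D), jx x = Nat.find (hkey x hx) := by
        intro x hx; simp only [hjxdef, dif_pos hx]
      have hr_spec : ∀ x (hx : x ∈ E ∩ D), 1 ≤ jx x ∧ t < ⨍ w in ball x (rfun x), h w ∂μ := by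
        intro x hx
        have h1 := Nat.find_spec (hkey x hx)
        rw [hrfundef]
        simp only [hjx_eq x hx]
        exact h1
      have hr_le30 : ∀ x (hx : x ∈ E ∩ D), rfun x ≤ s / 30 := by
        intro x hx
        have h1 : 1 ≤ jx x := (hr_spec x hx).1
        have h2 : ρfun (jx x) ≤ ρfun 1 := hρanti 1 (jx x) h1
        have h3 : ρfun 1 = s / 30 := by simp [hρdef]; ring
        rw [hrfundef]; rw [h3] at h2; exact h2
      have hstop : ∀ x (hx : x ∈ E ∩ D), ⨍ w in ball x (2 * rfun x), h w ∂μ ≤ t := by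
        intro x hx
        have h1 : 1 ≤ jx x := (hr_spec x hx).1
        obtain ⟨m, hm⟩ : ∃ m, jx x = m + 1 := ⟨jx x - 1, by omega⟩
        have h2 : 2 * rfun x = ρfun m := by rw [hrfundef]; simp only [hm]; exact hρsucc m
        rw [h2]
        rcases Nat.eq_zero_or_pos m with hm0 | hm1
        · rw [hm0]; exact htop x hx.1.1
        · have hlt : m < jx x := by omega
          rw [hjx_eq x hx] at hlt
          have h3 := Nat.find_min (hkey x hx) hlt
          push_neg at h3
          exact h3 hm1
      -- Vitali covering
      obtain ⟨u, husub, hudisj, hucover⟩ :=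
        Vitali.exists_disjoint_subfamily_covering_enlargement_closedBall (E ∩ D) id rfun (s / 15)
          (fun a _ => hr_le15 a) 5 (by norm_num)
      have hodisj : u.PairwiseDisjoint (fun b => ball b (rfun b)) := fun i hi j hj hij =>
        (hudisj hi hj hij).mono ball_subset_closedBall ball_subset_closedBall
      have hucnt : u.Countable :=
        hodisj.countable_of_isOpen (fun b _ => isOpen_ball) (fun b _ => nonempty_ball.2 (hr_pos b))
      have hcov : E ∩ D ⊆ ⋃ b ∈ u, ball b (6 * rfun b) := by
        intro x hx
        obtain ⟨b, hb, hsub⟩ := hucover x hx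
        have hxmem : x ∈ closedBall (id x) (rfun x) := mem_closedBall_self (hr_pos x).le
        exact mem_biUnion hb (closedBall_subset_ball (by nlinarith [hr_pos b]) (hsub hxmem))
      -- geometry of the selected balls
      have hballs : ∀ b ∈ u, ball b (2 * rfun b) ⊆ Q2 ∧ ball b (6 * rfun b) ⊆ Q2 ∧
          ball b (2 * (6 * rfun b)) ⊆ B5 := by
        intro b hb
        have hbE := husub hb
        have h30 := hr_le30 b hbE
        have hd : dist b y < s := mem_ball.1 hbE.1.1
        have hrb := hr_pos b
        refine ⟨?_, ?_, ?_⟩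
        · apply (ball_subset_ball' (by nlinarith) : ball b (2 * rfun b) ⊆ ball y (2 * s))
        · apply (ball_subset_ball' (by nlinarith) : ball b (6 * rfun b) ⊆ ball y (2 * s))
        · exact subset_trans (ball_subset_ball' (by nlinarith) : ball b (2 * (6 * rfun b)) ⊆ ball y (2 * s)) hQ2B5
      -- the averages chain bound
      have hchain : ∀ b ∈ u, |(⨍ w in ball b (6 * rfun b), f w ∂μ) - fQ| ≤ t + cD ^ 2 * N := by
        intro b hb
        obtain ⟨h2sub, h6sub, _⟩ := hballs b hb
        have hrb := hr_pos b
        have hm2_0 : μ (ball b (2 * rfun b)) ≠ 0 := (hD.pos b _ (by linarith)).ne'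
        have hm2_t : μ (ball b (2 * rfun b)) ≠ ⊤ := (hD.lt_top b _ (by linarith)).ne
        have hm6_0 : μ (ball b (6 * rfun b)) ≠ 0 := (hD.pos b _ (by linarith)).ne'
        have hm6_t : μ (ball b (6 * rfun b)) ≠ ⊤ := (hD.lt_top b _ (by linarith)).ne
        have hm2p : 0 < (μ (ball b (2 * rfun b))).toReal := ENNReal.toReal_pos hm2_0 hm2_t
        -- (i)
        have hi : |(⨍ w in ball b (2 * rfun b), f w ∂μ) - fQ| ≤ t := by
          refine le_trans (abs_setAverage_sub_le hm2_0 hm2_t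
            (hf.mono_set (h2sub.trans hQ2B5)) fQ) ?_
          have heq : ⨍ w in ball b (2 * rfun b), |f w - fQ| ∂μ
              = ⨍ w in ball b (2 * rfun b), h w ∂μ := by
            rw [setAverage_eq, setAverage_eq]
            congr 1
            apply setIntegral_congr_fun measurableSet_ball
            intro w hw
            exact (indicator_of_mem (h2sub hw) g).symm
          rw [heq]
          exact hstop b (husub hb)
        -- (ii)
        have hii : |(⨍ w in ball b (2 * rfun b), f w ∂μ)
            - ⨍ w in ball b (6 * rfun b), f w ∂μ| ≤ cD ^ 2 * N := by
          refine le_trans (abs_setAverage_sub_le hm2_0 hm2_t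
            (hf.mono_set (h2sub.trans hQ2B5)) _) ?_
          have hsub26 : ball b (2 * rfun b) ⊆ ball b (6 * rfun b) :=
            ball_subset_ball (by linarith)
          refine le_trans (setAverage_le_of_subset hsub26 hm2_0 hm6_t
            (habs _ _ (h6sub.trans hQ2B5)) (fun z => abs_nonneg _)) ?_
          have hosc : ⨍ z in ball b (6 * rfun b), |f z - ⨍ w in ball b (6 * rfun b), f w ∂μ| ∂μ ≤ N :=
            hN b (6 * rfun b) (by linarith) (h6sub.trans hQ2B5)
          have hoscnn := havg_nonneg (ball b (6 * rfun b)) (⨍ w in ball b (6 * rfun b), f w ∂μ)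
          have hratio : (μ (ball b (6 * rfun b))).toReal / (μ (ball b (2 * rfun b))).toReal ≤ cD ^ 2 := by
            rw [div_le_iff₀ hm2p]
            have := hD.toReal_le_of_le_pow b (r' := 6 * rfun b) (show (0:ℝ) < 2 * rfun b by linarith) 2 (by nlinarith)
            linarith [this]
          have hrationn : 0 ≤ (μ (ball b (6 * rfun b))).toReal / (μ (ball b (2 * rfun b))).toReal := by
            positivity
          nlinarith
        calc |(⨍ w in ball b (6 * rfun b), f w ∂μ) - fQ|
            ≤ |(⨍ w in ball b (6 * rfun b), f w ∂μ) - ⨍ w in ball b (2 * rfun b), f w ∂μ|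
              + |(⨍ w in ball b (2 * rfun b), f w ∂μ) - fQ| := abs_sub_le _ _ _
          _ ≤ cD ^ 2 * N + t := add_le_add (by rw [abs_sub_comm]; exact hii) hi
          _ = t + cD ^ 2 * N := by ring
      -- per ball estimate via induction hypothesis
      have hperb : ∀ b ∈ u, μ (E ∩ ball b (6 * rfun b))
          ≤ (1 / 2 : ℝ≥0∞) ^ n * (ENNReal.ofReal (cD ^ 3) * μ (ball b (rfun b))) := by
        intro b hb
        have hrb := hr_pos b
        have hsubset : E ∩ ball b (6 * rfun b)
            ⊆ {z ∈ ball b (6 * rfun b) | lvlp < |f z - ⨍ w in ball b (6 * rfun b), f w ∂μ|} := by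
          rintro z ⟨hzE, hzb⟩
          refine ⟨hzb, ?_⟩
          have h1 : lvl < |f z - fQ| := hzE.2
          have h2 := hchain b hb
          have h3 : |f z - fQ| ≤ |f z - ⨍ w in ball b (6 * rfun b), f w ∂μ|
              + |(⨍ w in ball b (6 * rfun b), f w ∂μ) - fQ| := abs_sub_le _ _ _
          have h4 : lvlp + (t + cD ^ 2 * N) ≤ lvl := by
            rw [hlvldef, hlvlpdef, htdef]
            push_cast
            nlinarith [hNpos, mul_le_mul_of_nonneg_right hKge2 hNpos.le,
              (Nat.cast_nonneg n : (0:ℝ) ≤ n)]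
          linarith
        calc μ (E ∩ ball b (6 * rfun b))
            ≤ μ {z ∈ ball b (6 * rfun b) | lvlp < |f z - ⨍ w in ball b (6 * rfun b), f w ∂μ|} :=
              measure_mono hsubset
          _ ≤ (1 / 2 : ℝ≥0∞) ^ n * μ (ball b (6 * rfun b)) :=
              IH b (6 * rfun b) (by linarith) (hballs b hb).2.2
          _ ≤ (1 / 2 : ℝ≥0∞) ^ n * (ENNReal.ofReal (cD ^ 3) * μ (ball b (rfun b))) :=
              mul_le_mul_right (hD.meas_le_of_le_pow b (hr_pos b) 3 (by nlinarith)) _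
      -- sum of the measures of the selected balls
      haveI := hucnt.to_subtype
      set S := ∑' (b : ↥u), μ (ball (b : X) (rfun (b : X))) with hSdef
      have hSb : ENNReal.ofReal t * S ≤ ENNReal.ofReal ((1 + cD) * N * (cD * (μ Q).toReal)) := by
        have hball_int : ∀ b : ↥u, ENNReal.ofReal t * μ (ball (b : X) (rfun (b : X)))
            ≤ ∫⁻ w in ball (b : X) (rfun (b : X)), ENNReal.ofReal (h w) ∂μ := by
          intro b
          have hbE := husub b.2
          have hsp := (hr_spec (b : X) hbE).2
          have hm := hD.toReal_pos (b : X) (hr_pos (b : X))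
          have hmt : μ (ball (b : X) (rfun (b : X))) ≠ ⊤ := (hD.lt_top _ _ (hr_pos _)).ne
          have hIr : t * (μ (ball (b : X) (rfun (b : X)))).toReal
              ≤ ∫ w in ball (b : X) (rfun (b : X)), h w ∂μ := by
            rw [setAverage_eq, smul_eq_mul] at hsp
            have h1 := (lt_inv_mul_iff₀ hm).1 hsp
            nlinarith
          calc ENNReal.ofReal t * μ (ball (b : X) (rfun (b : X)))
              = ENNReal.ofReal (t * (μ (ball (b : X) (rfun (b : X)))).toReal) := by
                rw [ENNReal.ofReal_mul htpos.le, ENNReal.ofReal_toReal hmt]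
            _ ≤ ENNReal.ofReal (∫ w in ball (b : X) (rfun (b : X)), h w ∂μ) :=
                ENNReal.ofReal_le_ofReal hIr
            _ = ∫⁻ w in ball (b : X) (rfun (b : X)), ENNReal.ofReal (h w) ∂μ :=
                ofReal_integral_eq_lintegral_ofReal hint.integrableOn
                  (Eventually.of_forall hnn)
        have hmQ2cD : (μ Q2).toReal ≤ cD * (μ Q).toReal := by
          have := hD.toReal_le_of_le_pow y (r' := 2 * s) hs 1 (by linarith)
          simpa using this
        calc ENNReal.ofReal t * S
            = ∑' (b : ↥u), ENNReal.ofReal t * μ (ball (b : X) (rfun (b : X))) :=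
              ENNReal.tsum_mul_left.symm
          _ ≤ ∑' (b : ↥u), ∫⁻ w in ball (b : X) (rfun (b : X)), ENNReal.ofReal (h w) ∂μ :=
              ENNReal.tsum_le_tsum hball_int
          _ = ∫⁻ w in ⋃ (b : ↥u), ball (b : X) (rfun (b : X)), ENNReal.ofReal (h w) ∂μ :=
              (lintegral_iUnion (fun b => measurableSet_ball) (hodisj.subtype _ _) _).symm
          _ ≤ ∫⁻ w, ENNReal.ofReal (h w) ∂μ := lintegral_mono' Measure.restrict_le_self le_rfl
          _ = ENNReal.ofReal (∫ w, h w ∂μ) :=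
              (ofReal_integral_eq_lintegral_ofReal hint (Eventually.of_forall hnn)).symm
          _ ≤ ENNReal.ofReal ((1 + cD) * N * (cD * (μ Q).toReal)) := by
              apply ENNReal.ofReal_le_ofReal
              rw [show ∫ w, h w ∂μ = ∫ z in Q2, g z ∂μ from integral_indicator measurableSet_ball]
              nlinarith [hF4, mul_le_mul_of_nonneg_left hmQ2cD
                (by positivity : (0:ℝ) ≤ (1 + cD) * N)]
      -- main measure bound
      have hmain : μ E ≤ (1 / 2 : ℝ≥0∞) ^ n * (ENNReal.ofReal (cD ^ 3) * S) := by
        calc μ E ≤ μ ((E ∩ D) ∪ Dᶜ) := measure_mono (fun z hz => by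
              by_cases hzD : z ∈ D
              · exact Or.inl ⟨hz, hzD⟩
              · exact Or.inr hzD)
          _ ≤ μ (E ∩ D) + μ Dᶜ := measure_union_le _ _
          _ = μ (E ∩ D) := by rw [hDc, add_zero]
          _ ≤ μ (⋃ b ∈ u, E ∩ ball b (6 * rfun b)) := measure_mono (fun z hz => by
              obtain ⟨b, hb, hzb⟩ := mem_iUnion₂.1 (hcov hz)
              exact mem_biUnion hb ⟨hz.1, hzb⟩)
          _ ≤ ∑' (b : ↥u), μ (E ∩ ball (b : X) (6 * rfun (b : X))) := measure_biUnion_le μ hucnt _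
          _ ≤ ∑' (b : ↥u), (1 / 2 : ℝ≥0∞) ^ n
                * (ENNReal.ofReal (cD ^ 3) * μ (ball (b : X) (rfun (b : X)))) :=
              ENNReal.tsum_le_tsum (fun b => hperb (b : X) b.2)
          _ = (1 / 2 : ℝ≥0∞) ^ n * (ENNReal.ofReal (cD ^ 3) * S) := by
              rw [ENNReal.tsum_mul_left, ENNReal.tsum_mul_left]
      have hSle : ENNReal.ofReal (cD ^ 3) * S ≤ μ Q / 2 := by
        have ht0 : ENNReal.ofReal t ≠ 0 := by
          rw [Ne, ENNReal.ofReal_eq_zero, not_le]; exact htpos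
        have hS2 : S ≤ ENNReal.ofReal ((1 + cD) * N * (cD * (μ Q).toReal) / t) := by
          rw [ENNReal.ofReal_div_of_pos htpos]
          rw [ENNReal.le_div_iff_mul_le (Or.inl ht0) (Or.inl ENNReal.ofReal_ne_top)]
          rw [mul_comm]
          exact hSb
        have hmQnn : (0 : ℝ) ≤ (μ Q).toReal := ENNReal.toReal_nonneg
        calc ENNReal.ofReal (cD ^ 3) * S
            ≤ ENNReal.ofReal (cD ^ 3) * ENNReal.ofReal ((1 + cD) * N * (cD * (μ Q).toReal) / t) :=
              mul_le_mul_right hS2 _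
          _ = ENNReal.ofReal (cD ^ 3 * ((1 + cD) * N * (cD * (μ Q).toReal) / t)) :=
              (ENNReal.ofReal_mul (by positivity)).symm
          _ ≤ ENNReal.ofReal ((μ Q).toReal / 2) := by
              apply ENNReal.ofReal_le_ofReal
              have heq : cD ^ 3 * ((1 + cD) * N * (cD * (μ Q).toReal) / t)
                  = (μ Q).toReal / (2 * cD ^ 2) := by
                rw [htdef]; unfold jnC3
                field_simp
              rw [heq]
              apply div_le_div_of_nonneg_left hmQnn two_pos
              nlinarith
          _ = μ Q / 2 := by
              rw [ENNReal.ofReal_div_of_pos two_pos, ENNReal.ofReal_toReal hμQt]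
              norm_num
      calc μ E ≤ (1 / 2 : ℝ≥0∞) ^ n * (ENNReal.ofReal (cD ^ 3) * S) := hmain
        _ ≤ (1 / 2 : ℝ≥0∞) ^ n * (μ Q / 2) := mul_le_mul_right hSle _
        _ = (1 / 2 : ℝ≥0∞) ^ (n + 1) * μ Q := by
            rw [pow_succ, div_eq_mul_inv, div_eq_mul_inv, one_mul]
            ring

end JN

/-- John–Nirenberg lemma, Lemma 2.4: there is a constant `A > 0`,
depending only on `c_D`, such that for every ball `B` and every `f ∈ BMO(5B)`,
`μ({x ∈ B : |f − f_B| > λ}) ≤ 2 μ(B) exp(−Aλ/‖f‖_*)` for all `λ > 0`. -/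
theorem john_nirenberg (cD : ℝ) (hcD : 1 < cD) :
    ∃ A : ℝ, 0 < A ∧
      ∀ (X : Type) [MetricSpace X] [CompleteSpace X] [MeasurableSpace X] [BorelSpace X]
        (μ : Measure X), IsDoublingWith μ cD →
      ∀ (x : X) (r : ℝ), 0 < r →
      ∀ f : X → ℝ, IntegrableOn f (ball x (5 * r)) μ →
      BddAbove {a | ∃ y s, 0 < s ∧ ball y s ⊆ ball x (5 * r) ∧ a = avgOsc μ f y s} →
      ∀ lam : ℝ, 0 < lam →
        μ {y ∈ ball x r | lam < |f y - ⨍ z in ball x r, f z ∂μ|} ≤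
          ENNReal.ofReal (2 * Real.exp (-A * lam / bmoNormIn μ f (ball x (5 * r)))) *
            μ (ball x r) := by
  classical
  have hKpos : 0 < jnK cD := jnK_pos hcD
  have hc3pos : 0 < jnC3 cD := jnC3_pos hcD
  have hc3K : jnC3 cD ≤ jnK cD := jnC3_le_jnK hcD
  have hlog2 : 0 < Real.log 2 := Real.log_pos one_lt_two
  refine ⟨Real.log 2 / (2 * jnK cD), by positivity, ?_⟩
  intro X _ _ _ _ μ hDW x r hr f hf hbdd lam hlam
  set A := Real.log 2 / (2 * jnK cD) with hA
  have hD : JN.DblData μ cD :=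
    ⟨hDW.1, fun p ρ hρ => (hDW.2.1 p ρ hρ).1, fun p ρ hρ => (hDW.2.1 p ρ hρ).2,
      fun p ρ hρ => hDW.2.2 p p ρ hρ ⟨p, mem_ball_self (by linarith), mem_ball_self hρ⟩⟩
  haveI : IsLocallyFiniteMeasure μ :=
    ⟨fun p => ⟨ball p 1, ball_mem_nhds p one_pos, hD.lt_top p 1 one_pos⟩⟩
  haveI : SecondCountableTopology X := JN.secondCountable hD x
  set N := bmoNormIn μ f (ball x (5 * r)) with hNdef
  set Q := ball x r with hQdef
  set fQ := ⨍ w in Q, f w ∂μ with hfQ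
  have hQ5 : ball x r ⊆ ball x (5 * r) := ball_subset_ball (by linarith)
  have hle : ∀ (y' : X) (s' : ℝ), 0 < s' → ball y' s' ⊆ ball x (5 * r) →
      avgOsc μ f y' s' ≤ N :=
    fun y' s' h1 h2 => le_csSup hbdd ⟨y', s', h1, h2, rfl⟩
  have hoscnn : 0 ≤ avgOsc μ f x r := by
    rw [avgOsc, setAverage_eq, smul_eq_mul]
    exact mul_nonneg (by positivity) (integral_nonneg fun z => abs_nonneg _)
  have hN0 : 0 ≤ N := le_trans hoscnn (hle x r hr hQ5)
  have hμQ0 : μ Q ≠ 0 := (hD.pos x r hr).ne'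
  have hμQt : μ Q ≠ ⊤ := (hD.lt_top x r hr).ne
  rcases eq_or_lt_of_le hN0 with hN0' | hNpos
  · -- the degenerate case `N = 0`
    have hosc0 : avgOsc μ f x r = 0 := le_antisymm (hN0' ▸ hle x r hr hQ5) hoscnn
    have hint : IntegrableOn (fun z => |f z - fQ|) Q μ := by
      have h1 : IntegrableOn f Q μ := hf.mono_set hQ5
      have h2 : IntegrableOn (fun _ : X => fQ) Q μ := by
        exact integrableOn_const hμQt
      exact (h1.sub h2).abs
    have hI0 : ∫ z in Q, |f z - fQ| ∂μ = 0 := by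
      have h1 := hosc0
      rw [avgOsc, setAverage_eq, smul_eq_mul] at h1
      have hpos : 0 < (μ Q).toReal := ENNReal.toReal_pos hμQ0 hμQt
      rcases mul_eq_zero.1 h1 with h | h
      · exact absurd h (by positivity)
      · exact h
    have hae : ∀ᵐ z ∂(μ.restrict Q), |f z - fQ| = 0 := by
      have h1 := (integral_eq_zero_iff_of_nonneg (fun z => abs_nonneg _) hint).1 hI0
      filter_upwards [h1] with z hz using hz
    have hzero : μ {y ∈ Q | lam < |f y - fQ|} = 0 := by
      have h2 : μ.restrict Q {z | lam < |f z - fQ|} = 0 := by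
        refine measure_mono_null (fun z hz => ?_) (ae_iff.1 hae)
        rw [mem_setOf_eq] at hz ⊢
        intro hz0
        rw [hz0] at hz
        linarith
      calc μ {y ∈ Q | lam < |f y - fQ|} = μ ({z | lam < |f z - fQ|} ∩ Q) := by
            congr 1; ext z; simp [mem_sep_iff, and_comm]
        _ = μ.restrict Q {z | lam < |f z - fQ|} :=
            (Measure.restrict_apply' measurableSet_ball).symm
        _ = 0 := h2
    rw [hzero]; exact zero_le
  · rcases le_or_gt lam (2 * jnK cD * N) with hsmall | hbig
    · -- small `lam`: the bound is trivial
      have h2 : A * lam / N ≤ Real.log 2 := by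
        rw [hA, div_mul_eq_mul_div, div_div]
        rw [div_le_iff₀ (by positivity)]
        have h3 : lam ≤ 2 * jnK cD * N := hsmall
        nlinarith
      have h1 : (1 : ℝ) ≤ 2 * Real.exp (-A * lam / N) := by
        have h4 : -A * lam / N = -(A * lam / N) := by ring
        rw [h4]
        calc (1 : ℝ) = 2 * Real.exp (-Real.log 2) := by
              rw [Real.exp_neg, Real.exp_log two_pos]; norm_num
          _ ≤ 2 * Real.exp (-(A * lam / N)) := by
              have := Real.exp_le_exp.2 (neg_le_neg h2)
              linarith
      calc μ {y ∈ Q | lam < |f y - fQ|} ≤ μ Q := measure_mono (fun z hz => hz.1)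
        _ = 1 * μ Q := (one_mul _).symm
        _ ≤ ENNReal.ofReal (2 * Real.exp (-A * lam / N)) * μ Q := by
            apply mul_le_mul_left
            rw [← ENNReal.ofReal_one]
            exact ENNReal.ofReal_le_ofReal h1
    · -- large `lam`: use the exponential decay from `claim`
      set n := ⌊(lam / N - jnC3 cD) / jnK cD⌋₊ with hn
      have hτ : 2 * jnK cD < lam / N := (lt_div_iff₀ hNpos).2 (by linarith)
      have harg : 1 ≤ (lam / N - jnC3 cD) / jnK cD := by
        rw [le_div_iff₀ hKpos]; linarith
      have hnle : (n : ℝ) ≤ (lam / N - jnC3 cD) / jnK cD :=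
        Nat.floor_le (by linarith)
      have hlev : (jnC3 cD + (n : ℝ) * jnK cD) * N ≤ lam := by
        have h1 : (n : ℝ) * jnK cD ≤ lam / N - jnC3 cD := (le_div_iff₀ hKpos).1 hnle
        have h2 : jnC3 cD + (n : ℝ) * jnK cD ≤ lam / N := by linarith
        calc (jnC3 cD + (n : ℝ) * jnK cD) * N ≤ lam / N * N :=
              mul_le_mul_of_nonneg_right h2 hNpos.le
          _ = lam := div_mul_cancel₀ lam hNpos.ne'
      have hmono : {y ∈ Q | lam < |f y - fQ|}
          ⊆ {y ∈ Q | (jnC3 cD + (n : ℝ) * jnK cD) * N < |f y - fQ|} :=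
        fun z hz => ⟨hz.1, lt_of_le_of_lt hlev hz.2⟩
      have hclaim := JN.claim hD x r hr f hf N hNpos hle n x r hr
        (ball_subset_ball (by linarith))
      have hgrow : ((1 : ℝ) / 2) ^ n ≤ 2 * Real.exp (-A * lam / N) := by
        have hfl : (lam / N - jnC3 cD) / jnK cD < n + 1 := Nat.lt_floor_add_one _
        have hAτ : A * (lam / N) ≤ ((n : ℝ) + 1) * Real.log 2 := by
          have h1 : lam / N / (2 * jnK cD) ≤ (lam / N - jnC3 cD) / jnK cD := by
            rw [div_le_div_iff₀ (by positivity) hKpos]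
            nlinarith
          calc A * (lam / N) = Real.log 2 * (lam / N / (2 * jnK cD)) := by
                rw [hA]; ring
            _ ≤ Real.log 2 * ((lam / N - jnC3 cD) / jnK cD) :=
                mul_le_mul_of_nonneg_left h1 hlog2.le
            _ ≤ Real.log 2 * ((n : ℝ) + 1) := mul_le_mul_of_nonneg_left hfl.le hlog2.le
            _ = ((n : ℝ) + 1) * Real.log 2 := mul_comm _ _
        have hhalf : ((1 : ℝ) / 2) ^ n = Real.exp (-((n : ℝ) * Real.log 2)) := by
          rw [← Real.exp_log (show (0 : ℝ) < ((1 : ℝ) / 2) ^ n by positivity),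
            Real.log_pow, one_div, Real.log_inv]
          congr 1
          push_cast
          ring
        have hrw : -A * lam / N = -(A * (lam / N)) := by ring
        rw [hhalf, hrw]
        have h2 : 2 * Real.exp (-(A * (lam / N))) = Real.exp (Real.log 2 - A * (lam / N)) := by
          rw [Real.exp_sub, Real.exp_log two_pos, Real.exp_neg, div_eq_mul_inv]
          ring
        rw [h2]
        apply Real.exp_le_exp.2
        linarith
      calc μ {y ∈ Q | lam < |f y - fQ|}
          ≤ μ {y ∈ Q | (jnC3 cD + (n : ℝ) * jnK cD) * N < |f y - fQ|} := measure_mono hmono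
        _ ≤ (1 / 2 : ℝ≥0∞) ^ n * μ Q := hclaim
        _ ≤ ENNReal.ofReal (2 * Real.exp (-A * lam / N)) * μ Q := by
            apply mul_le_mul_left
            calc (1 / 2 : ℝ≥0∞) ^ n = ENNReal.ofReal (((1 : ℝ) / 2) ^ n) := by
                  rw [ENNReal.ofReal_pow (by norm_num)]
                  congr 1
                  rw [ENNReal.ofReal_div_of_pos two_pos, ENNReal.ofReal_one,
                    ENNReal.ofReal_ofNat]
              _ ≤ ENNReal.ofReal (2 * Real.exp (-A * lam / N)) :=
                  ENNReal.ofReal_le_ofReal hgrow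
end

section
/- Let f : X → ℝ be μ-measurable with |f| < ∞ μ-almost everywhere in X. Assume there exist positive constants C₁, C₂ such that for every ball B ⊂ X and every pair of real numbers −∞ < s ≤ t < ∞, min{ μ({x ∈ B : f(x) ≥ t}), μ({x ∈ B : f(x) ≤ s}) } ≤ C₁ μ(B) exp(−C₂ (t − s)). Then f ∈ BMO(X) and ‖f‖_* ≤ 4 (C₁ + 1) C₂⁻¹ exp(2 C₂). -/
open MeasureTheory Metric ENNReal

-- Auxiliary lemmas
section Aux
open Set

-- median existence
lemma jn_median {X : Type*} [MetricSpace X] [MeasurableSpace X] [BorelSpace X]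
    (μ : Measure X) (f : X → ℝ) (hf : Measurable f) (B : Set X) (hBm : MeasurableSet B)
    (hB0 : 0 < μ B) (hBt : μ B < ⊤) :
    ∃ m : ℝ, (∀ ε : ℝ, 0 < ε → μ B / 2 ≤ μ {y ∈ B | m - ε ≤ f y}) ∧
      (∀ ε : ℝ, 0 < ε → μ B / 2 ≤ μ {y ∈ B | f y ≤ m + ε}) := by
  set A : Set ℝ := {t : ℝ | μ B / 2 ≤ μ {y ∈ B | t ≤ f y}} with hA
  have hmble : ∀ t : ℝ, MeasurableSet {y ∈ B | t ≤ f y} := by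
    intro t
    exact hBm.inter (hf measurableSet_Ici)
  -- A nonempty
  have hAne : A.Nonempty := by
    set S : ℕ → Set X := fun n => {y ∈ B | -(n : ℝ) ≤ f y} with hS
    have hmono : Monotone S := by
      intro i j hij y hy
      exact ⟨hy.1, le_trans (neg_le_neg (by exact_mod_cast hij)) hy.2⟩
    have hU : (⋃ n, S n) = B := by
      ext y
      constructor
      · rintro ⟨s, ⟨n, rfl⟩, hy⟩; exact hy.1
      · intro hy
        obtain ⟨n, hn⟩ := exists_nat_ge (-(f y))
        exact mem_iUnion.mpr ⟨n, hy, neg_le.mp hn⟩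
    have key : μ B ≤ ⨆ n, μ (S n) := by
      conv_lhs => rw [← hU]
      exact le_of_eq (Directed.measure_iUnion hmono.directed_le)
    have half : μ B / 2 < ⨆ n, μ (S n) :=
      lt_of_lt_of_le (ENNReal.half_lt_self hB0.ne' hBt.ne) key
    obtain ⟨n, hn⟩ := lt_iSup_iff.mp half
    exact ⟨-(n : ℝ), hn.le⟩
  -- A bounded above
  obtain ⟨N, hN⟩ : ∃ N : ℕ, μ {y ∈ B | (N : ℝ) ≤ f y} < μ B / 2 := by
    set T : ℕ → Set X := fun n => {y ∈ B | (n : ℝ) ≤ f y} with hT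
    have hanti : Directed (· ⊇ ·) T := by
      refine Antitone.directed_ge ?_
      intro i j hij y hy
      exact ⟨hy.1, le_trans (by exact_mod_cast hij) hy.2⟩
    have hI : (⋂ n, T n) = ∅ := by
      ext y
      simp only [mem_iInter, mem_empty_iff_false, iff_false]
      intro hy
      obtain ⟨n, hn⟩ := exists_nat_gt (f y)
      exact absurd ((hy n).2) (not_le.mpr hn)
    have key : μ (⋂ n, T n) = ⨅ n, μ (T n) :=
      Directed.measure_iInter (fun n => (hmble _).nullMeasurableSet) hanti
        ⟨0, (lt_of_le_of_lt (measure_mono fun y hy => hy.1) hBt).ne⟩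
    rw [hI, measure_empty] at key
    have : ⨅ n, μ (T n) < μ B / 2 := by
      rw [← key]; exact ENNReal.half_pos hB0.ne'
    exact iInf_lt_iff.mp this
  have hbdd : BddAbove A := by
    refine ⟨N, fun t ht => ?_⟩
    by_contra hcon
    push_neg at hcon
    have : μ {y ∈ B | t ≤ f y} ≤ μ {y ∈ B | (N : ℝ) ≤ f y} :=
      measure_mono fun y hy => ⟨hy.1, le_trans hcon.le hy.2⟩
    exact absurd (le_trans ht this) (not_le.mpr hN)
  set m := sSup A with hm
  refine ⟨m, fun ε hε => ?_, fun ε hε => ?_⟩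
  · obtain ⟨a, haA, ha⟩ := exists_lt_of_lt_csSup hAne (by linarith : m - ε < m)
    exact le_trans haA (measure_mono fun y hy => ⟨hy.1, le_trans ha.le hy.2⟩)
  · have hnotA : m + ε / 2 ∉ A := fun hin => absurd (le_csSup hbdd hin) (by linarith)
    have h2 : μ {y ∈ B | m + ε / 2 ≤ f y} < μ B / 2 := not_le.mp hnotA
    by_contra hcon
    push_neg at hcon
    have hcover : B ⊆ {y ∈ B | f y ≤ m + ε} ∪ {y ∈ B | m + ε / 2 ≤ f y} := by
      intro y hy
      by_cases hfy : f y ≤ m + ε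
      · exact Or.inl ⟨hy, hfy⟩
      · exact Or.inr ⟨hy, by push_neg at hfy; linarith⟩
    have : μ B < μ B := by
      calc μ B ≤ μ ({y ∈ B | f y ≤ m + ε} ∪ {y ∈ B | m + ε / 2 ≤ f y}) := measure_mono hcover
      _ ≤ μ {y ∈ B | f y ≤ m + ε} + μ {y ∈ B | m + ε / 2 ≤ f y} := measure_union_le _ _
      _ < μ B / 2 + μ B / 2 := ENNReal.add_lt_add hcon h2
      _ = μ B := ENNReal.add_halves _
    exact absurd this (lt_irrefl _)


lemma jn_exp_int (a : ℝ) {b : ℝ} (hb : 0 < b) :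
    ∫ x in Set.Ioi a, Real.exp (-(b * x)) = Real.exp (-(b * a)) / b := by
  have h := MeasureTheory.integral_comp_mul_left_Ioi (fun x => Real.exp (-x)) a hb
  simp only [smul_eq_mul] at h
  calc ∫ x in Set.Ioi a, Real.exp (-(b * x)) = b⁻¹ * ∫ x in Set.Ioi (b * a), Real.exp (-x) := h
  _ = Real.exp (-(b * a)) / b := by rw [integral_exp_neg_Ioi]; ring

lemma jn_exp_lint (a : ℝ) {b : ℝ} (hb : 0 < b) :
    ∫⁻ x in Set.Ioi a, ENNReal.ofReal (Real.exp (-(b * x))) =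
      ENNReal.ofReal (Real.exp (-(b * a)) / b) := by
  rw [← jn_exp_int a hb]
  refine (ofReal_integral_eq_lintegral_ofReal ?_ ?_).symm
  · have := exp_neg_integrableOn_Ioi a hb
    exact (by simpa [neg_mul] using this : IntegrableOn (fun x => Real.exp (-(b * x))) (Ioi a) volume)
  · exact Filter.Eventually.of_forall fun x => (Real.exp_pos _).le

lemma jn_ball_bound {X : Type*} [MetricSpace X] [MeasurableSpace X] [BorelSpace X]
    (μ : Measure X) (f : X → ℝ) (hf : Measurable f) (C₁ C₂ : ℝ) (hC₁ : 0 < C₁) (hC₂ : 0 < C₂)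
    (B : Set X) (hBm : MeasurableSet B) (hB0 : 0 < μ B) (hBt : μ B < ⊤)
    (m : ℝ)
    (hP1 : μ B / 2 ≤ μ {y ∈ B | m - 1 ≤ f y})
    (hP2 : μ B / 2 ≤ μ {y ∈ B | f y ≤ m + 1})
    (h : ∀ s t : ℝ, s ≤ t →
      min (μ {y ∈ B | t ≤ f y}) (μ {y ∈ B | f y ≤ s}) ≤
        ENNReal.ofReal (C₁ * Real.exp (-C₂ * (t - s))) * μ B) :
    IntegrableOn f B μ ∧
      ⨍ y in B, |f y - ⨍ z in B, f z ∂μ| ∂μ ≤ 2 * (1 + max 0 (Real.log (2 * C₁)) / C₂ + 2 / C₂) := by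
  have hmble : ∀ t : ℝ, MeasurableSet {y ∈ B | t ≤ f y} := fun t =>
    hBm.inter (hf measurableSet_Ici)
  -- Tail bounds
  set E : ℝ → ℝ := fun l => C₁ * Real.exp (-C₂ * (l - 1)) with hE
  have hEpos : ∀ l : ℝ, 0 < E l := fun l => mul_pos hC₁ (Real.exp_pos _)
  have hdouble : ∀ (a : ℝ≥0∞) (l : ℝ), μ B / 2 ≤ ENNReal.ofReal (E l) * μ B → a ≤ μ B →
      a ≤ ENNReal.ofReal (2 * E l) * μ B := by
    intro a l hhalf ha
    calc a ≤ μ B := ha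
    _ = μ B / 2 + μ B / 2 := (ENNReal.add_halves _).symm
    _ ≤ ENNReal.ofReal (E l) * μ B + ENNReal.ofReal (E l) * μ B := add_le_add hhalf hhalf
    _ = ENNReal.ofReal (2 * E l) * μ B := by
        rw [← add_mul, ← ENNReal.ofReal_add (hEpos l).le (hEpos l).le]; ring_nf
  have hU : ∀ l : ℝ, 1 ≤ l → μ {y ∈ B | m + l ≤ f y} ≤ ENNReal.ofReal (2 * E l) * μ B := by
    intro l hl
    have hmin := h (m + 1) (m + l) (by linarith)
    rw [show m + l - (m + 1) = l - 1 by ring] at hmin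
    rcases min_le_iff.mp hmin with hc | hc
    · refine le_trans hc (mul_le_mul_left (ENNReal.ofReal_le_ofReal ?_) _)
      simp only [hE]; nlinarith [Real.exp_pos (-C₂ * (l - 1)), hC₁]
    · exact hdouble _ l (le_trans hP2 hc) (measure_mono fun y hy => hy.1)
  have hL : ∀ l : ℝ, 1 ≤ l → μ {y ∈ B | f y ≤ m - l} ≤ ENNReal.ofReal (2 * E l) * μ B := by
    intro l hl
    have hmin := h (m - l) (m - 1) (by linarith)
    rw [show m - 1 - (m - l) = l - 1 by ring] at hmin
    rcases min_le_iff.mp hmin with hc | hc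
    · exact hdouble _ l (le_trans hP1 hc) (measure_mono fun y hy => hy.1)
    · refine le_trans hc (mul_le_mul_left (ENNReal.ofReal_le_ofReal ?_) _)
      simp only [hE]; nlinarith [Real.exp_pos (-C₂ * (l - 1)), hC₁]
  have hT : ∀ l : ℝ, 1 ≤ l →
      μ {y ∈ B | l ≤ |f y - m|} ≤ ENNReal.ofReal (4 * E l) * μ B := by
    intro l hl
    have hsub : {y ∈ B | l ≤ |f y - m|} ⊆ {y ∈ B | m + l ≤ f y} ∪ {y ∈ B | f y ≤ m - l} := by
      intro y hy
      rcases le_abs.mp hy.2 with hc | hc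
      · exact Or.inl ⟨hy.1, by linarith⟩
      · exact Or.inr ⟨hy.1, by linarith⟩
    calc μ {y ∈ B | l ≤ |f y - m|}
        ≤ μ ({y ∈ B | m + l ≤ f y} ∪ {y ∈ B | f y ≤ m - l}) := measure_mono hsub
    _ ≤ μ {y ∈ B | m + l ≤ f y} + μ {y ∈ B | f y ≤ m - l} := measure_union_le _ _
    _ ≤ ENNReal.ofReal (2 * E l) * μ B + ENNReal.ofReal (2 * E l) * μ B :=
        add_le_add (hU l hl) (hL l hl)
    _ = ENNReal.ofReal (4 * E l) * μ B := by
        rw [← add_mul, ← ENNReal.ofReal_add (by positivity) (by positivity)]; ring_nf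
  -- Layer cake
  set g : X → ℝ := fun y => |f y - m| with hg
  have hgm : Measurable g := (hf.sub measurable_const).abs
  set ν := μ.restrict B with hν
  have hνuniv : ν univ = μ B := by rw [hν, Measure.restrict_apply_univ]
  haveI : IsFiniteMeasure ν := ⟨by rw [hνuniv]; exact hBt⟩
  have hνset : ∀ t : ℝ, ν {a | t ≤ g a} = μ {y ∈ B | t ≤ g y} := by
    intro t
    rw [hν, Measure.restrict_apply (measurableSet_le measurable_const hgm)]
    congr 1; ext y; simp only [mem_inter_iff, mem_setOf_eq]; tauto
  set l₁ : ℝ := 1 + max 0 (Real.log (2 * C₁)) / C₂ with hl₁def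
  have hl₁ : 1 ≤ l₁ := le_add_of_nonneg_right (by positivity)
  set I := ∫⁻ y, ENNReal.ofReal (g y) ∂ν with hIdef
  have hlayer : I = ∫⁻ t in Ioi (0:ℝ), ν {a | t ≤ g a} :=
    lintegral_eq_lintegral_meas_le ν (ae_of_all _ fun y => abs_nonneg _) hgm.aemeasurable
  have hkey : 4 * C₁ * Real.exp C₂ * (Real.exp (-(C₂ * l₁)) / C₂) ≤ 2 / C₂ := by
    have hexp : Real.exp (-(C₂ * l₁)) =
        Real.exp (-C₂) * Real.exp (-(max 0 (Real.log (2 * C₁)))) := by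
      rw [← Real.exp_add]
      congr 1
      rw [hl₁def]; field_simp; ring
    have hmaxexp : 4 * C₁ * Real.exp (-(max 0 (Real.log (2 * C₁)))) ≤ 2 := by
      rcases le_or_gt (Real.log (2 * C₁)) 0 with hlog | hlog
      · rw [max_eq_left hlog, neg_zero, Real.exp_zero, mul_one]
        have h2C : 2 * C₁ ≤ 1 := by
          calc 2 * C₁ = Real.exp (Real.log (2 * C₁)) :=
                (Real.exp_log (by positivity)).symm
          _ ≤ Real.exp 0 := Real.exp_le_exp.mpr hlog
          _ = 1 := Real.exp_zero
        linarith
      · rw [max_eq_right hlog.le, Real.exp_neg, Real.exp_log (by positivity)]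
        have hC₁' : C₁ ≠ 0 := hC₁.ne'
        refine le_of_eq ?_
        field_simp
        linarith
    have hee : Real.exp C₂ * Real.exp (-C₂) = 1 := by
      rw [← Real.exp_add]; simp
    calc 4 * C₁ * Real.exp C₂ * (Real.exp (-(C₂ * l₁)) / C₂)
        = 4 * C₁ * Real.exp (-(max 0 (Real.log (2 * C₁)))) *
            (Real.exp C₂ * Real.exp (-C₂)) / C₂ := by rw [hexp]; ring
    _ = 4 * C₁ * Real.exp (-(max 0 (Real.log (2 * C₁)))) / C₂ := by rw [hee, mul_one]
    _ ≤ 2 / C₂ := by gcongr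
  have hbound : I ≤ μ B * ENNReal.ofReal (l₁ + 2 / C₂) := by
    rw [hlayer, show Ioi (0:ℝ) = Ioc 0 l₁ ∪ Ioi l₁ from
      (Ioc_union_Ioi_eq_Ioi (by linarith)).symm,
      lintegral_union measurableSet_Ioi Ioc_disjoint_Ioi_same]
    have p1 : ∫⁻ t in Ioc (0:ℝ) l₁, ν {a | t ≤ g a} ≤ μ B * ENNReal.ofReal l₁ := by
      calc ∫⁻ t in Ioc (0:ℝ) l₁, ν {a | t ≤ g a} ≤ ∫⁻ _t in Ioc (0:ℝ) l₁, μ B :=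
            lintegral_mono fun t => by rw [← hνuniv]; exact measure_mono (subset_univ _)
      _ = μ B * volume (Ioc (0:ℝ) l₁) := setLIntegral_const _ _
      _ = μ B * ENNReal.ofReal l₁ := by rw [Real.volume_Ioc, sub_zero]
    have p2 : ∫⁻ t in Ioi l₁, ν {a | t ≤ g a}
        ≤ μ B * ENNReal.ofReal (4 * C₁ * Real.exp C₂ * (Real.exp (-(C₂ * l₁)) / C₂)) := by
      calc ∫⁻ t in Ioi l₁, ν {a | t ≤ g a}
          ≤ ∫⁻ t in Ioi l₁, (ENNReal.ofReal (4 * C₁ * Real.exp C₂) * μ B) *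
              ENNReal.ofReal (Real.exp (-(C₂ * t))) := by
            refine setLIntegral_mono' measurableSet_Ioi fun t ht => ?_
            have ht1 : (1:ℝ) ≤ t := le_trans hl₁ (le_of_lt ht)
            rw [hνset]
            refine le_trans (hT t ht1) ?_
            have h4E : 4 * E t = 4 * C₁ * Real.exp C₂ * Real.exp (-(C₂ * t)) := by
              simp only [hE]
              rw [show -C₂ * (t - 1) = C₂ + -(C₂ * t) by ring, Real.exp_add]
              ring
            rw [h4E, ENNReal.ofReal_mul (by positivity)]
            exact le_of_eq (by ring)
      _ = (ENNReal.ofReal (4 * C₁ * Real.exp C₂) * μ B) *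
            ∫⁻ t in Ioi l₁, ENNReal.ofReal (Real.exp (-(C₂ * t))) :=
          lintegral_const_mul' _ _ (ENNReal.mul_ne_top ofReal_ne_top hBt.ne)
      _ = (ENNReal.ofReal (4 * C₁ * Real.exp C₂) * μ B) *
            ENNReal.ofReal (Real.exp (-(C₂ * l₁)) / C₂) := by rw [jn_exp_lint l₁ hC₂]
      _ = μ B * (ENNReal.ofReal (4 * C₁ * Real.exp C₂) *
            ENNReal.ofReal (Real.exp (-(C₂ * l₁)) / C₂)) := by ring
      _ = μ B * ENNReal.ofReal (4 * C₁ * Real.exp C₂ * (Real.exp (-(C₂ * l₁)) / C₂)) := by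
          rw [← ENNReal.ofReal_mul (by positivity)]
    calc _ ≤ μ B * ENNReal.ofReal l₁ +
          μ B * ENNReal.ofReal (4 * C₁ * Real.exp C₂ * (Real.exp (-(C₂ * l₁)) / C₂)) :=
        add_le_add p1 p2
    _ = μ B * (ENNReal.ofReal l₁ +
          ENNReal.ofReal (4 * C₁ * Real.exp C₂ * (Real.exp (-(C₂ * l₁)) / C₂))) := by ring
    _ ≤ μ B * ENNReal.ofReal (l₁ + 2 / C₂) := by
        refine mul_le_mul_right ?_ _
        rw [← ENNReal.ofReal_add (by positivity) (by positivity)]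
        exact ENNReal.ofReal_le_ofReal (by linarith)
  -- Integrability
  have hgint : Integrable g ν := by
    refine ⟨hgm.aestronglyMeasurable, ?_⟩
    rw [hasFiniteIntegral_iff_ofReal (ae_of_all _ fun y => abs_nonneg _)]
    exact lt_of_le_of_lt hbound (ENNReal.mul_lt_top hBt ofReal_lt_top)
  have hfmint : Integrable (fun y => f y - m) ν := by
    refine (integrable_norm_iff ((hf.sub measurable_const).aestronglyMeasurable)).mp ?_
    simpa only [hg, Real.norm_eq_abs, Pi.sub_apply] using hgint
  have hfint : IntegrableOn f B μ := by
    have h2 := hfmint.add (integrable_const m)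
    have h3 : ((fun y => f y - m) + fun _ => m) = f := by funext y; simp
    rwa [h3] at h2
  refine ⟨hfint, ?_⟩
  -- Real-valued bounds
  set V := (μ B).toReal with hV
  have hVpos : 0 < V := ENNReal.toReal_pos hB0.ne' hBt.ne
  set S := l₁ + 2 / C₂ with hSdef
  have hSpos : 0 < S := by positivity
  have hreal : ∫ y, g y ∂ν ≤ V * S := by
    rw [integral_eq_lintegral_of_nonneg_ae (ae_of_all _ fun y => abs_nonneg _)
      hgm.aestronglyMeasurable]
    calc (∫⁻ y, ENNReal.ofReal (g y) ∂ν).toReal ≤ (μ B * ENNReal.ofReal S).toReal :=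
        ENNReal.toReal_mono (ENNReal.mul_ne_top hBt.ne ofReal_ne_top) hbound
    _ = V * S := by rw [ENNReal.toReal_mul, ENNReal.toReal_ofReal hSpos.le]
  set c := ⨍ z in B, f z ∂μ with hcdef
  have hcV : V * c = ∫ z in B, f z ∂μ := by
    rw [hcdef, setAverage_eq, smul_eq_mul, ← mul_assoc, show μ.real B = V from rfl, mul_inv_cancel₀ hVpos.ne', one_mul]
  have hfν : Integrable f ν := hfint
  have hdiff : ∫ y, (f y - m) ∂ν = V * (c - m) := by
    rw [integral_sub hfν (integrable_const m), integral_const, show ν.real univ = V from congrArg ENNReal.toReal hνuniv, smul_eq_mul]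
    rw [mul_sub, hcV, hν]
  have hmc : V * |c - m| ≤ ∫ y, g y ∂ν := by
    have habs : |∫ y, (f y - m) ∂ν| ≤ ∫ y, |f y - m| ∂ν := by
      simpa only [Real.norm_eq_abs] using norm_integral_le_integral_norm (fun y => f y - m) (μ := ν)
    rw [hdiff] at habs
    rw [abs_mul, abs_of_pos hVpos] at habs
    exact habs
  have hint_fc : Integrable (fun y => |f y - c|) ν := ((hfint.sub (integrable_const c)).abs)
  have hfc : ∫ y, |f y - c| ∂ν ≤ 2 * (V * S) := by
    have hmono : ∫ y, |f y - c| ∂ν ≤ ∫ y, (g y + |c - m|) ∂ν := by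
      refine integral_mono hint_fc (hgint.add (integrable_const _)) fun y => ?_
      calc |f y - c| ≤ |f y - m| + |m - c| := abs_sub_le _ _ _
      _ = g y + |c - m| := by rw [abs_sub_comm m c]
    rw [integral_add hgint (integrable_const _), integral_const, show ν.real univ = V from congrArg ENNReal.toReal hνuniv, smul_eq_mul] at hmono
    calc ∫ y, |f y - c| ∂ν ≤ ∫ y, g y ∂ν + V * |c - m| := hmono
    _ ≤ V * S + V * S := add_le_add hreal (le_trans hmc hreal)
    _ = 2 * (V * S) := by ring
  show ⨍ y, |f y - c| ∂ν ≤ 2 * S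
  calc ⨍ y, |f y - c| ∂ν = V⁻¹ * ∫ y, |f y - c| ∂ν := by
        rw [average_eq, smul_eq_mul, show ν.real univ = V from congrArg ENNReal.toReal hνuniv]
  _ ≤ V⁻¹ * (2 * (V * S)) := mul_le_mul_of_nonneg_left hfc (by positivity)
  _ = 2 * S := by
        rw [show V⁻¹ * (2 * (V * S)) = (V⁻¹ * V) * (2 * S) by ring,
          inv_mul_cancel₀ hVpos.ne', one_mul]

end Aux

/-- Lemma 3.6: the converse of the two-sided John–Nirenberg estimate. -/
theorem two_sided_jn_converse {X : Type*} [MetricSpace X] [CompleteSpace X]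
    [MeasurableSpace X] [BorelSpace X] (μ : Measure X) (cD : ℝ)
    (hμ : IsDoublingWith μ cD) (f : X → ℝ) (hf : Measurable f)
    (C₁ C₂ : ℝ) (hC₁ : 0 < C₁) (hC₂ : 0 < C₂)
    (h : ∀ (x : X) (r : ℝ), 0 < r → ∀ s t : ℝ, s ≤ t →
      min (μ {y ∈ ball x r | t ≤ f y}) (μ {y ∈ ball x r | f y ≤ s}) ≤
        ENNReal.ofReal (C₁ * Real.exp (-C₂ * (t - s))) * μ (ball x r)) :
    MemBMO μ f ∧ bmoNorm μ f ≤ 4 * (C₁ + 1) * C₂⁻¹ * Real.exp (2 * C₂) := by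
  set M0 : ℝ := 2 * (1 + max 0 (Real.log (2 * C₁)) / C₂ + 2 / C₂) with hM0
  have hball : ∀ (x : X) (r : ℝ), 0 < r →
      IntegrableOn f (Metric.ball x r) μ ∧ avgOsc μ f x r ≤ M0 := by
    intro x r hr
    obtain ⟨hB0, hBt⟩ := hμ.2.1 x r hr
    obtain ⟨m, hm1, hm2⟩ := jn_median μ f hf (Metric.ball x r) measurableSet_ball hB0 hBt
    obtain ⟨h1, h2⟩ := jn_ball_bound μ f hf C₁ C₂ hC₁ hC₂ (Metric.ball x r)
      measurableSet_ball hB0 hBt m (hm1 1 one_pos) (hm2 1 one_pos)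
      (fun s t hst => h x r hr s t hst)
    exact ⟨h1, h2⟩
  have hM0M : M0 ≤ 4 * (C₁ + 1) * C₂⁻¹ * Real.exp (2 * C₂) := by
    have hL : max 0 (Real.log (2 * C₁)) ≤ 2 * C₁ := by
      refine max_le (by positivity) ?_
      nlinarith [Real.log_le_sub_one_of_pos (show (0:ℝ) < 2 * C₁ by positivity)]
    have hexp : 2 * C₂ + 1 ≤ Real.exp (2 * C₂) := Real.add_one_le_exp _
    rw [hM0]
    rw [← mul_le_mul_iff_of_pos_right hC₂]
    have e1 : 2 * (1 + max 0 (Real.log (2 * C₁)) / C₂ + 2 / C₂) * C₂ =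
        2 * C₂ + 2 * max 0 (Real.log (2 * C₁)) + 4 := by field_simp; ring
    have e2 : 4 * (C₁ + 1) * C₂⁻¹ * Real.exp (2 * C₂) * C₂ =
        4 * (C₁ + 1) * Real.exp (2 * C₂) := by field_simp
    rw [e1, e2]
    nlinarith [mul_nonneg (show (0:ℝ) ≤ C₁ + 1 by linarith)
      (show (0:ℝ) ≤ Real.exp (2 * C₂) - (2 * C₂ + 1) by linarith), hC₂.le, hC₁.le]
  have hbdd : ∀ a ∈ bmoSet μ f, a ≤ M0 := by
    rintro a ⟨x, r, hr, rfl⟩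
    exact (hball x r hr).2
  refine ⟨⟨fun x => ⟨Metric.ball x 1, Metric.ball_mem_nhds x one_pos,
    (hball x 1 one_pos).1⟩, ⟨M0, hbdd⟩⟩, ?_⟩
  refine Real.sSup_le (fun a ha => le_trans (hbdd a ha) hM0M) ?_
  positivity
end

section
/- Let λ : ℝ → [0,1] be a non-constant, non-decreasing function, and assume there exist positive constants C₁, C₂ such that min{λ(s), 1 − λ(t)} ≤ C₁ exp(−C₂ (t − s)) for every pair of real numbers −∞ < s ≤ t < ∞. Then there exists t₀ ∈ ℝ such that max{λ(t₀ − t), 1 − λ(t₀ + t)} ≤ (C₁ + 1) exp(2 C₂) exp(−C₂ t) for every t ≥ 0. -/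
/-- Lemma 3.7, Gotoh: a decay estimate for non-constant, non-decreasing
functions `λ : ℝ → [0,1]` satisfying `min{λ(s), 1 − λ(t)} ≤ C₁ exp(−C₂(t−s))`. -/
theorem gotoh_monotone_lemma (l : ℝ → ℝ) (hrange : ∀ t, l t ∈ Set.Icc (0 : ℝ) 1)
    (hmono : Monotone l) (hnonconst : ∃ s t : ℝ, l s ≠ l t)
    (C₁ C₂ : ℝ) (hC₁ : 0 < C₁) (hC₂ : 0 < C₂)
    (h : ∀ s t : ℝ, s ≤ t → min (l s) (1 - l t) ≤ C₁ * Real.exp (-C₂ * (t - s))) :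
    ∃ t₀ : ℝ, ∀ t : ℝ, 0 ≤ t →
      max (l (t₀ - t)) (1 - l (t₀ + t)) ≤
        (C₁ + 1) * Real.exp (2 * C₂) * Real.exp (-C₂ * t) := by
  obtain ⟨a', b', hne⟩ := hnonconst
  obtain ⟨a, b, hab⟩ : ∃ a b, l a < l b := by
    rcases hne.lt_or_gt with h' | h'
    · exact ⟨a', b', h'⟩
    · exact ⟨b', a', h'⟩
  have hla1 : l a < 1 := lt_of_lt_of_le hab (hrange b).2
  have hlb0 : 0 < l b := lt_of_le_of_lt (hrange a).1 hab
  set S : Set ℝ := {x | l x < 1/2} with hS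
  have decay : ∀ δ : ℝ, 0 < δ → ∀ d : ℝ, max (Real.log (C₁/δ) / C₂) 0 + 1 ≤ d →
      C₁ * Real.exp (-C₂ * d) < δ := by
    intro δ hδ d hd
    have hq : 0 < C₁ / δ := div_pos hC₁ hδ
    have h1 : Real.log (C₁/δ) < C₂ * d := by
      have h2 : Real.log (C₁/δ) / C₂ ≤ d - 1 :=
        le_trans (le_max_left _ _) (by linarith)
      have h3 := (div_le_iff₀ hC₂).mp h2
      nlinarith
    have h4 : C₁ * Real.exp (-C₂ * d) < C₁ * Real.exp (-(Real.log (C₁/δ))) := by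
      apply mul_lt_mul_of_pos_left _ hC₁
      exact Real.exp_lt_exp.mpr (by linarith)
    have h5 : C₁ * Real.exp (-(Real.log (C₁/δ))) = δ := by
      rw [Real.exp_neg, Real.exp_log hq]
      field_simp
    linarith
  have hSne : S.Nonempty := by
    set δ := min (1 - l a) (1/2 : ℝ) with hδdef
    have hδ : 0 < δ := lt_min (by linarith) (by norm_num)
    refine ⟨a - (max (Real.log (C₁/δ) / C₂) 0 + 1), ?_⟩
    set s₀ := a - (max (Real.log (C₁/δ) / C₂) 0 + 1) with hs₀
    have hmax0 : (0:ℝ) ≤ max (Real.log (C₁/δ) / C₂) 0 := le_max_right _ _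
    have hsa : s₀ ≤ a := by rw [hs₀]; linarith
    have hkey := h s₀ a hsa
    have hd : max (Real.log (C₁/δ) / C₂) 0 + 1 ≤ a - s₀ := by rw [hs₀]; linarith
    have hlt := decay δ hδ (a - s₀) hd
    have hmin : min (l s₀) (1 - l a) < δ := lt_of_le_of_lt hkey hlt
    have hδ1 : δ ≤ 1 - l a := min_le_left _ _
    have hδ2 : δ ≤ 1/2 := min_le_right _ _
    have : l s₀ < δ := by
      rcases min_lt_iff.mp hmin with h' | h'
      · exact h'
      · linarith
    show l s₀ < 1/2
    linarith
  have hSbdd : BddAbove S := by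
    set δ := min (l b) (1/2 : ℝ) with hδdef
    have hδ : 0 < δ := lt_min hlb0 (by norm_num)
    refine ⟨b + max (Real.log (C₁/δ) / C₂) 0 + 1, ?_⟩
    intro x hx
    by_contra hxgt
    push_neg at hxgt
    have hmax0 : (0:ℝ) ≤ max (Real.log (C₁/δ) / C₂) 0 := le_max_right _ _
    have hbx : b ≤ x := by linarith
    have hkey := h b x hbx
    have hlt := decay δ hδ (x - b) (by linarith)
    have hmin : min (l b) (1 - l x) < δ := lt_of_le_of_lt hkey hlt
    have hδ1 : δ ≤ l b := min_le_left _ _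
    have hδ2 : δ ≤ 1/2 := min_le_right _ _
    have hx2 : 1 - l x < δ := by
      rcases min_lt_iff.mp hmin with h' | h'
      · linarith
      · exact h'
    have : l x < 1/2 := hx
    linarith
  refine ⟨sSup S, ?_⟩
  set t₀ := sSup S with ht₀
  have hA : ∀ x, x < t₀ → l x ≤ 1/2 := by
    intro x hx
    obtain ⟨y, hyS, hxy⟩ := exists_lt_of_lt_csSup hSne hx
    exact le_of_lt (lt_of_le_of_lt (hmono hxy.le) hyS)
  have hB : ∀ x, t₀ < x → 1/2 ≤ l x := by
    intro x hx
    by_contra hlt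
    push_neg at hlt
    have : x ≤ t₀ := le_csSup hSbdd hlt
    linarith
  intro t ht
  rcases le_or_gt t 2 with ht2 | ht2
  · have hRHS : (1:ℝ) ≤ (C₁ + 1) * Real.exp (2 * C₂) * Real.exp (-C₂ * t) := by
      have h1 : (1:ℝ) ≤ C₁ + 1 := by linarith
      have h2 : (1:ℝ) ≤ Real.exp (2 * C₂) * Real.exp (-C₂ * t) := by
        rw [← Real.exp_add]
        have h0 : (0:ℝ) ≤ 2 * C₂ + (-C₂ * t) := by nlinarith
        calc (1:ℝ) = Real.exp 0 := Real.exp_zero.symm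
          _ ≤ _ := Real.exp_le_exp.mpr h0
      calc (1:ℝ) = 1 * 1 := by ring
        _ ≤ (C₁ + 1) * (Real.exp (2 * C₂) * Real.exp (-C₂ * t)) :=
            mul_le_mul h1 h2 (by norm_num) (by linarith)
        _ = _ := by ring
    apply max_le
    · linarith [(hrange (t₀ - t)).2]
    · linarith [(hrange (t₀ + t)).1]
  · have hbound : C₁ * Real.exp (-C₂ * (t - 1)) ≤
        (C₁ + 1) * Real.exp (2 * C₂) * Real.exp (-C₂ * t) := by
      have he : Real.exp (-C₂ * (t - 1)) = Real.exp C₂ * Real.exp (-C₂ * t) := by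
        rw [← Real.exp_add]; ring_nf
      rw [he]
      have h1 : C₁ ≤ C₁ + 1 := by linarith
      have h2 : Real.exp C₂ ≤ Real.exp (2 * C₂) := Real.exp_le_exp.mpr (by linarith)
      calc C₁ * (Real.exp C₂ * Real.exp (-C₂ * t))
          = (C₁ * Real.exp C₂) * Real.exp (-C₂ * t) := by ring
        _ ≤ ((C₁ + 1) * Real.exp (2 * C₂)) * Real.exp (-C₂ * t) := by
            apply mul_le_mul_of_nonneg_right _ (Real.exp_pos _).le
            exact mul_le_mul h1 h2 (Real.exp_pos _).le (by linarith)
        _ = _ := by ring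
    apply max_le
    · have hA1 : l (t₀ - 1) ≤ 1/2 := hA _ (by linarith)
      have hmle : l (t₀ - t) ≤ l (t₀ - 1) := hmono (by linarith)
      have hkey := h (t₀ - t) (t₀ - 1) (by linarith)
      have hminx : min (l (t₀ - t)) (1 - l (t₀ - 1)) = l (t₀ - t) :=
        min_eq_left (by linarith)
      rw [hminx] at hkey
      have heq : (t₀ - 1) - (t₀ - t) = t - 1 := by ring
      rw [heq] at hkey
      exact hkey.trans hbound
    · have hB1 : 1/2 ≤ l (t₀ + 1) := hB _ (by linarith)
      have hmle : l (t₀ + 1) ≤ l (t₀ + t) := hmono (by linarith)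
      have hkey := h (t₀ + 1) (t₀ + t) (by linarith)
      have hminx : min (l (t₀ + 1)) (1 - l (t₀ + t)) = 1 - l (t₀ + t) :=
        min_eq_right (by linarith)
      rw [hminx] at hkey
      have heq : (t₀ + t) - (t₀ + 1) = t - 1 := by ring
      rw [heq] at hkey
      exact hkey.trans hbound
end

section
/- (Strömberg-type lemma) Let f : X → ℝ be μ-measurable and assume there exist constants 0 < γ < (4 c_D³)⁻¹ and λ > 0 such that for every ball B ⊂ X, inf_{c ∈ ℝ} μ({x ∈ B : |f(x) − c| ≥ λ}) ≤ γ μ(B). Then f ∈ BMO(X) and ‖f‖_* ≤ C λ, where C is a positive constant depending only on the doubling constant c_D. -/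
open MeasureTheory Metric ENNReal

open Set Filter Topology


private lemma aux_double {X : Type} [MetricSpace X] [MeasurableSpace X] (μ : Measure X)
    (κ : ℝ≥0∞) (hdb : ∀ (x : X) (r : ℝ), 0 < r → μ (ball x (2*r)) ≤ κ * μ (ball x r)) :
    ∀ (n : ℕ) (x : X) (r : ℝ), 0 < r → μ (ball x (2^n * r)) ≤ κ^n * μ (ball x r) := by
  intro n
  induction n with
  | zero => intro x r hr; simp
  | succ n ih =>
    intro x r hr
    have h1 : (2:ℝ)^(n+1) * r = 2^n * (2*r) := by ring
    calc μ (ball x (2^(n+1) * r)) = μ (ball x (2^n * (2*r))) := by rw [h1]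
      _ ≤ κ^n * μ (ball x (2*r)) := ih x (2*r) (by linarith)
      _ ≤ κ^n * (κ * μ (ball x r)) := by gcongr; exact hdb x r hr
      _ = κ^(n+1) * μ (ball x r) := by ring

private lemma aux_cmp {X : Type} [MetricSpace X] [MeasurableSpace X] (μ : Measure X)
    (κ : ℝ≥0∞) (hdb : ∀ (x : X) (r : ℝ), 0 < r → μ (ball x (2*r)) ≤ κ * μ (ball x r))
    (n : ℕ) (x : X) {a b : ℝ} (hb : 0 < b) (hab : a ≤ 2^n * b) :
    μ (ball x a) ≤ κ^n * μ (ball x b) :=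
  le_trans (measure_mono (ball_subset_ball hab)) (aux_double μ κ hdb n x b hb)

private lemma aux_secondCountable {X : Type} [MetricSpace X] [CompleteSpace X]
    [MeasurableSpace X] [BorelSpace X] (μ : Measure X)
    (hpos : ∀ (x : X) (r : ℝ), 0 < r → 0 < μ (ball x r))
    (hfin : ∀ (x : X) (r : ℝ), 0 < r → μ (ball x r) < ⊤)
    (κ : ℝ≥0∞) (hκ : κ ≠ ⊤)
    (hdb : ∀ (x : X) (r : ℝ), 0 < r → μ (ball x (2*r)) ≤ κ * μ (ball x r)) :
    SecondCountableTopology X := by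
  have prop : ProperSpace X := by
    constructor
    intro x r
    refine TotallyBounded.isCompact_of_isClosed ?_ isClosed_closedBall
    have hsub : closedBall x r ⊆ ball x (|r|+1) := by
      intro z hz
      have : dist z x ≤ r := mem_closedBall.1 hz
      have : dist z x ≤ |r| := le_trans this (le_abs_self r)
      exact mem_ball.2 (by linarith)
    refine TotallyBounded.subset hsub ?_
    set R : ℝ := |r| + 1 with hR
    have hR0 : 0 < R := by positivity
    rw [Metric.totallyBounded_iff]
    by_contra hcon
    push_neg at hcon
    obtain ⟨ε, hε, hεcov⟩ := hcon
    -- construct ε-separated sequence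
    have hstep : ∀ (t : Finset X), ∃ z, z ∈ ball x R ∧ ∀ y ∈ t, ε ≤ dist z y := by
      intro t
      have := hεcov t t.finite_toSet
      rw [Set.not_subset] at this
      obtain ⟨z, hz1, hz2⟩ := this
      refine ⟨z, hz1, fun y hy => ?_⟩
      by_contra hlt
      push_neg at hlt
      exact hz2 (Set.mem_biUnion hy (mem_ball.2 (by linarith [hlt])))
    -- iterate
    haveI := Classical.decEq X
    let F : ℕ → Finset X := fun n => Nat.rec ∅ (fun _ s => insert (hstep s).choose s) n
    have hFmono : ∀ m n, m ≤ n → F m ⊆ F n := by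
      intro m n hmn
      induction n with
      | zero => simp at hmn; simp [hmn]
      | succ n ih =>
        rcases Nat.lt_or_ge m (n+1) with h | h
        · exact subset_trans (ih (Nat.lt_succ_iff.1 h)) (Finset.subset_insert _ _)
        · have : m = n + 1 := le_antisymm hmn h
          simp [this]
    let u : ℕ → X := fun n => (hstep (F n)).choose
    have huball : ∀ n, u n ∈ ball x R := fun n => (hstep (F n)).choose_spec.1
    have husep : ∀ m n, m < n → ε ≤ dist (u n) (u m) := by
      intro m n hmn
      have hum : u m ∈ F n := by
        have : u m ∈ F (m+1) := Finset.mem_insert_self _ _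
        exact hFmono (m+1) n hmn this
      exact (hstep (F n)).choose_spec.2 (u m) hum
    -- disjoint balls
    have hdisj : Pairwise (Function.onFun Disjoint (fun n => ball (u n) (ε/2))) := by
      intro m n hmn
      apply ball_disjoint_ball
      rcases Nat.lt_or_ge m n with h | h
      · have := husep m n h; rw [dist_comm]; linarith
      · have := husep n m (lt_of_le_of_ne h (Ne.symm hmn)); linarith
    -- each small ball has comparable measure to big ball
    obtain ⟨m, hm⟩ := pow_unbounded_of_one_lt (4*(R+ε)/ε) (one_lt_two (α := ℝ))
    have hkey : ∀ n, μ (ball x (R+ε)) ≤ κ^m * μ (ball (u n) (ε/2)) := by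
      intro n
      have h1 : ball x (R+ε) ⊆ ball (u n) (2*(R+ε)) := by
        intro z hz
        have h2 := mem_ball.1 (huball n)
        have h3 := mem_ball.1 hz
        rw [mem_ball]
        calc dist z (u n) ≤ dist z x + dist x (u n) := dist_triangle _ _ _
          _ < (R+ε) + R := by rw [dist_comm x (u n)]; linarith
          _ ≤ 2*(R+ε) := by linarith
      refine le_trans (measure_mono h1) (aux_cmp μ κ hdb m (u n) (by linarith) ?_)
      rw [div_lt_iff₀ (by linarith : (0:ℝ) < ε)] at hm
      nlinarith
    -- sum up over N small balls
    have hsum : ∀ N : ℕ, (N : ℝ≥0∞) * μ (ball x (R+ε)) ≤ κ^m * μ (ball x (R+ε)) := by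
      intro N
      have hsub2 : ∀ n, ball (u n) (ε/2) ⊆ ball x (R+ε) := by
        intro n z hz
        have h2 := mem_ball.1 (huball n)
        have h3 := mem_ball.1 hz
        rw [mem_ball]
        calc dist z x ≤ dist z (u n) + dist (u n) x := dist_triangle _ _ _
          _ < ε/2 + R := by linarith
          _ ≤ R + ε := by linarith
      have hdisj2 : (↑(Finset.range N) : Set ℕ).PairwiseDisjoint (fun n => ball (u n) (ε/2)) :=
        fun a _ b _ hab => hdisj hab
      have e1 : μ (⋃ n ∈ Finset.range N, ball (u n) (ε/2))
          = ∑ n ∈ Finset.range N, μ (ball (u n) (ε/2)) :=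
        measure_biUnion_finset hdisj2 (fun n _ => measurableSet_ball)
      have e2 : ∑ n ∈ Finset.range N, μ (ball x (R+ε))
          ≤ ∑ n ∈ Finset.range N, κ^m * μ (ball (u n) (ε/2)) :=
        Finset.sum_le_sum (fun n _ => hkey n)
      calc (N : ℝ≥0∞) * μ (ball x (R+ε)) = ∑ _n ∈ Finset.range N, μ (ball x (R+ε)) := by
            simp [Finset.sum_const, nsmul_eq_mul]
        _ ≤ ∑ n ∈ Finset.range N, κ^m * μ (ball (u n) (ε/2)) := e2
        _ = κ^m * ∑ n ∈ Finset.range N, μ (ball (u n) (ε/2)) := by rw [Finset.mul_sum]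
        _ = κ^m * μ (⋃ n ∈ Finset.range N, ball (u n) (ε/2)) := by rw [e1]
        _ ≤ κ^m * μ (ball x (R+ε)) := by gcongr; exact Set.iUnion₂_subset fun n _ => hsub2 n
    have hB0 : μ (ball x (R+ε)) ≠ 0 := (hpos x (R+ε) (by linarith)).ne'
    have hBt : μ (ball x (R+ε)) ≠ ⊤ := (hfin x (R+ε) (by linarith)).ne
    have hcan : ∀ N : ℕ, (N : ℝ≥0∞) ≤ κ^m :=
      fun N => (ENNReal.mul_le_mul_iff_left hB0 hBt).1 (hsum N)
    obtain ⟨N, hN⟩ := ENNReal.exists_nat_gt (pow_ne_top hκ : κ^m ≠ ⊤)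
    exact absurd (hcan N) (not_le.2 hN)
  exact secondCountable_of_proper

private lemma aux_uldm {X : Type} [MetricSpace X] [MeasurableSpace X] (μ : Measure X)
    {cD : ℝ} (hcD : 1 < cD)
    (hdb : ∀ (x : X) (r : ℝ), 0 < r →
      μ (ball x (2*r)) ≤ ENNReal.ofReal cD * μ (ball x r)) :
    IsUnifLocDoublingMeasure μ := by
  refine ⟨⟨(cD*cD).toNNReal, ?_⟩⟩
  filter_upwards [self_mem_nhdsWithin] with ε (hε : 0 < ε)
  intro x
  have h1 : closedBall x (2*ε) ⊆ ball x (4*ε) := by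
    intro z hz; rw [mem_ball]; rw [mem_closedBall] at hz; linarith
  have h2 : ball x ε ⊆ closedBall x ε := ball_subset_closedBall
  have h4 : (4:ℝ)*ε = 2*(2*ε) := by ring
  calc μ (closedBall x (2*ε)) ≤ μ (ball x (4*ε)) := measure_mono h1
    _ ≤ ENNReal.ofReal cD * μ (ball x (2*ε)) := by rw [h4]; exact hdb x (2*ε) (by linarith)
    _ ≤ ENNReal.ofReal cD * (ENNReal.ofReal cD * μ (ball x ε)) := by gcongr; exact hdb x ε hε
    _ = (ENNReal.ofReal cD * ENNReal.ofReal cD) * μ (ball x ε) := by ring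
    _ = ((cD*cD).toNNReal : ℝ≥0∞) * μ (ball x ε) := by
        rw [← ENNReal.ofReal_mul (by linarith)]; rfl
    _ ≤ ((cD*cD).toNNReal : ℝ≥0∞) * μ (closedBall x ε) := by gcongr

private lemma meas_sep {X : Type} [MetricSpace X] [MeasurableSpace X] [BorelSpace X]
    {f : X → ℝ} (hf : Measurable f) {A : Set X} (hA : MeasurableSet A) (t a : ℝ) :
    MeasurableSet {v ∈ A | t ≤ |f v - a|} :=
  hA.inter (measurableSet_le measurable_const ((hf.sub_const a).abs))

private lemma stromberg_key {X : Type} [MetricSpace X] [MeasurableSpace X] [BorelSpace X]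
    [SecondCountableTopology X]
    (μ : Measure X) [IsUnifLocDoublingMeasure μ] [IsLocallyFiniteMeasure μ]
    (hpos : ∀ (x : X) (r : ℝ), 0 < r → 0 < μ (ball x r))
    (hfin : ∀ (x : X) (r : ℝ), 0 < r → μ (ball x r) < ⊤)
    (κ : ℝ≥0∞) (hκ : κ ≠ ⊤)
    (hdb : ∀ (x : X) (r : ℝ), 0 < r → μ (ball x (2*r)) ≤ κ * μ (ball x r))
    (g : ℝ≥0∞)
    (hq : 2 * κ^3 * g ≤ 2⁻¹)
    (hgκ2 : κ^2 * g ≤ 4⁻¹)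
    (f : X → ℝ) (hf : Measurable f)
    (lam : ℝ) (hlam : 0 < lam)
    (c : X → ℝ → ℝ)
    (hc : ∀ (x : X) (r : ℝ), 0 < r →
      μ {v ∈ ball x r | lam ≤ |f v - c x r|} ≤ g * μ (ball x r)) :
    ∀ (k : ℕ) (y : X) (s : ℝ), 0 < s →
      μ {v ∈ ball y (s/2) | (1+2*(k:ℝ))*lam ≤ |f v - c y s|}
        ≤ (2*κ^3*g)^k * (g * μ (ball y s)) := by
  intro k
  induction k with
  | zero =>
    intro y s hs
    simp only [pow_zero, one_mul, Nat.cast_zero]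
    refine le_trans (measure_mono ?_) (hc y s hs)
    rintro v ⟨hv1, hv2⟩
    exact ⟨ball_subset_ball (by linarith) hv1, le_trans (by linarith) hv2⟩
  | succ k ih =>
    intro y s hs
    simp only [Nat.cast_add, Nat.cast_one]
    set cV := c y s with hcV
    set E := {v ∈ ball y s | lam ≤ |f v - cV|} with hEdef
    have hEmeas : MeasurableSet E := meas_sep hf measurableSet_ball lam cV
    have hEle : μ E ≤ g * μ (ball y s) := hc y s hs
    set T := {v ∈ ball y (s/2) | (1+2*((k:ℝ)+1))*lam ≤ |f v - cV|} with hTdef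
    have hTE : T ⊆ E := by
      rintro v ⟨hv1, hv2⟩
      refine ⟨ball_subset_ball (by linarith) hv1, le_trans ?_ hv2⟩
      have : (0:ℝ) ≤ (k:ℝ) := Nat.cast_nonneg k
      nlinarith
    -- the density set
    set D := {w : X | Tendsto
        (fun j : ℕ => μ (E ∩ closedBall w ((s/8) * (2⁻¹)^j)) / μ (closedBall w ((s/8)*(2⁻¹)^j)))
        atTop (𝓝 1)} with hDdef
    have hdens : ∀ᵐ w ∂μ.restrict E, w ∈ D := by
      filter_upwards [IsUnifLocDoublingMeasure.ae_tendsto_measure_inter_div μ E 1] with w hw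
      refine hw (fun _ : ℕ => w) (fun j => (s/8)*(2⁻¹)^j) ?_ ?_
      · apply tendsto_nhdsWithin_of_tendsto_nhds_of_eventually_within
        · have := (tendsto_pow_atTop_nhds_zero_of_lt_one
            (by norm_num : (0:ℝ) ≤ 2⁻¹) (by norm_num : (2⁻¹:ℝ) < 1)).const_mul (s/8)
          simpa using this
        · exact Eventually.of_forall (fun j => Set.mem_Ioi.2 (by positivity))
      · exact Eventually.of_forall (fun j => mem_closedBall_self (by positivity))
    set N := toMeasurable (μ.restrict E) Dᶜ with hNdef
    have hNE : μ (N ∩ E) = 0 := by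
      have h1 : (μ.restrict E) N = 0 := by
        rw [measure_toMeasurable]
        exact hdens
      rwa [Measure.restrict_apply (measurableSet_toMeasurable _ _)] at h1
    -- main covering estimate for points in T ∩ D
    have key2 : ∀ w, w ∈ T ∩ D → ∃ t : ℝ, 0 < t ∧ t < s/4 ∧
        μ (closedBall w t) ≤ 2 * μ (E ∩ closedBall w t) ∧
        μ {v ∈ ball w (4*t) | (1+2*((k:ℝ)+1))*lam ≤ |f v - cV|}
          ≤ (2*κ^3*g)^k * (g * μ (ball w (8*t))) := by
      rintro w ⟨hwT, hwD⟩
      have hwy : w ∈ ball y (s/2) := hwT.1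
      set S := {t : ℝ | 0 < t ∧ μ (closedBall w t) ≤ 2 * μ (E ∩ closedBall w t)} with hSdef
      have hSne : S.Nonempty := by
        have h12 : (2⁻¹ : ℝ≥0∞) < 1 := by norm_num
        obtain ⟨j, hj⟩ := (hwD.eventually (lt_mem_nhds h12)).exists
        refine ⟨(s/8)*(2⁻¹)^j, by positivity, ?_⟩
        set t := (s/8)*(2⁻¹:ℝ)^j with htdef
        have ht : (0:ℝ) < t := by positivity
        have hb0 : μ (closedBall w t) ≠ 0 :=
          (lt_of_lt_of_le (hpos w t ht) (measure_mono ball_subset_closedBall)).ne'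
        have hbt : μ (closedBall w t) ≠ ⊤ := by
          refine (lt_of_le_of_lt (measure_mono ?_) (hfin w (2*t) (by linarith))).ne
          intro z hz; rw [mem_ball]; rw [mem_closedBall] at hz; linarith
        have h2 : 2⁻¹ * μ (closedBall w t) < μ (E ∩ closedBall w t) := by
          have := (ENNReal.mul_lt_mul_iff_left hb0 hbt).2 hj
          rwa [ENNReal.div_mul_cancel hb0 hbt] at this
        calc μ (closedBall w t) = 2*(2⁻¹ * μ (closedBall w t)) := by
              rw [← mul_assoc, ENNReal.mul_inv_cancel two_ne_zero ENNReal.ofNat_ne_top, one_mul]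
          _ ≤ 2 * μ (E ∩ closedBall w t) := by gcongr
      have hSlt : ∀ t ∈ S, t < s/4 := by
        rintro t ⟨ht0, ht2⟩
        by_contra hcon
        push_neg at hcon
        have h1 : ball w (s/4) ⊆ closedBall w t := fun z hz => by
          rw [mem_closedBall]; rw [mem_ball] at hz; linarith
        have h3 : μ (ball y s) ≤ κ^3 * μ (ball w (s/4)) := by
          refine le_trans (measure_mono (?_ : ball y s ⊆ ball w (2*s)))
            (aux_cmp μ κ hdb 3 w (by linarith) (le_of_eq (by ring)))
          intro z hz
          rw [mem_ball] at hz hwy ⊢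
          have := dist_triangle z y w
          rw [dist_comm y w] at this
          linarith
        have hchain : μ (ball w (s/4)) ≤ 2⁻¹ * μ (ball w (s/4)) := by
          calc μ (ball w (s/4)) ≤ μ (closedBall w t) := measure_mono h1
            _ ≤ 2 * μ (E ∩ closedBall w t) := ht2
            _ ≤ 2 * μ E := by gcongr; exact inter_subset_left
            _ ≤ 2 * (g * μ (ball y s)) := by gcongr
            _ ≤ 2 * (g * (κ^3 * μ (ball w (s/4)))) := by gcongr
            _ = (2 * κ^3 * g) * μ (ball w (s/4)) := by ring
            _ ≤ 2⁻¹ * μ (ball w (s/4)) := by gcongr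
        have hlt : 2⁻¹ * μ (ball w (s/4)) < μ (ball w (s/4)) := by
          have h := ENNReal.half_lt_self (hpos w (s/4) (by linarith)).ne'
            (hfin w (s/4) (by linarith)).ne
          rwa [ENNReal.div_eq_inv_mul] at h
        exact absurd hchain (not_le.2 hlt)
      have hSbdd : BddAbove S := ⟨s/4, fun t ht => (hSlt t ht).le⟩
      obtain ⟨t0, ht0S⟩ := hSne
      have hsup0 : 0 < sSup S := lt_of_lt_of_le ht0S.1 (le_csSup hSbdd ht0S)
      obtain ⟨t, htS, htgt⟩ := exists_lt_of_lt_csSup ⟨t0, ht0S⟩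
        (by linarith : sSup S / 2 < sSup S)
      have ht0 : 0 < t := htS.1
      have htlt : t < s/4 := hSlt t htS
      have h2t : ¬ (2*t ∈ S) := fun h => absurd (le_csSup hSbdd h) (by linarith)
      have hstop : 2 * μ (E ∩ closedBall w (2*t)) < μ (closedBall w (2*t)) := by
        rcases lt_or_ge (2 * μ (E ∩ closedBall w (2*t))) (μ (closedBall w (2*t))) with h | h
        · exact h
        · exact absurd ⟨by linarith, h⟩ h2t
      set cU := c w (8*t) with hcUdef
      set badU := {v ∈ ball w (8*t) | lam ≤ |f v - cU|} with hbadUdef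
      have hbadUle : μ badU ≤ g * μ (ball w (8*t)) := hc w (8*t) (by linarith)
      set W := closedBall w (2*t) with hWdef
      have hWfin : μ W < ⊤ := by
        refine lt_of_le_of_lt (measure_mono ?_) (hfin w (4*t) (by linarith))
        intro z hz; rw [hWdef, mem_closedBall] at hz; rw [mem_ball]; linarith
      have hWsub : W ⊆ ball y s := by
        intro z hz
        rw [hWdef, mem_closedBall] at hz
        rw [mem_ball] at hwy ⊢
        have := dist_triangle z w y
        linarith
      have hWsubU : W ⊆ ball w (8*t) := by
        intro z hz; rw [hWdef, mem_closedBall] at hz; rw [mem_ball]; linarith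
      have hzex : (W \ (E ∪ badU)).Nonempty := by
        by_contra hcon
        rw [not_nonempty_iff_eq_empty] at hcon
        have hWcov : μ W ≤ μ (E ∩ W) + μ (badU ∩ W) := by
          have hsub : W ⊆ (E ∩ W) ∪ (badU ∩ W) := by
            intro v hv
            by_cases h1 : v ∈ E
            · exact Or.inl ⟨h1, hv⟩
            by_cases h2 : v ∈ badU
            · exact Or.inr ⟨h2, hv⟩
            exact absurd (show v ∈ W \ (E ∪ badU) from ⟨hv, fun h => h.elim h1 h2⟩)
              (by rw [hcon]; exact notMem_empty v)
          exact le_trans (measure_mono hsub) (measure_union_le _ _)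
        have hbadW : 4 * μ (badU ∩ W) ≤ μ W := by
          calc 4 * μ (badU ∩ W) ≤ 4 * μ badU := by gcongr; exact inter_subset_left
            _ ≤ 4 * (g * μ (ball w (8*t))) := by gcongr
            _ ≤ 4 * (g * (κ^2 * μ (ball w (2*t)))) := by
                gcongr
                exact aux_cmp μ κ hdb 2 w (by linarith) (le_of_eq (by ring))
            _ = 4 * (κ^2 * g) * μ (ball w (2*t)) := by ring
            _ ≤ 4 * 4⁻¹ * μ (ball w (2*t)) := by gcongr
            _ = μ (ball w (2*t)) := by
                rw [ENNReal.mul_inv_cancel (by norm_num) (by norm_num), one_mul]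
            _ ≤ μ W := measure_mono ball_subset_closedBall
        have h2bad : 2 * μ (badU ∩ W) ≤ μ W :=
          le_trans (mul_le_mul_left (by norm_num : (2:ℝ≥0∞) ≤ 4) _) hbadW
        have hfinal : 4 * μ W < 4 * μ W := by
          calc 4 * μ W = 2 * μ W + 2 * μ W := by ring
            _ ≤ 2 * (μ (E ∩ W) + μ (badU ∩ W)) + 2 * μ W := by gcongr
            _ = 2 * μ (E ∩ W) + (2 * μ (badU ∩ W) + 2 * μ W) := by ring
            _ < μ W + (2 * μ (badU ∩ W) + 2 * μ W) := by
                have hfin3 : 2 * μ (badU ∩ W) + 2 * μ W ≠ ⊤ :=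
                  ENNReal.add_ne_top.2 ⟨(lt_of_le_of_lt h2bad hWfin).ne,
                    ENNReal.mul_ne_top (by norm_num) hWfin.ne⟩
                exact ENNReal.add_lt_add_right hfin3 hstop
            _ ≤ μ W + (μ W + 2 * μ W) := by gcongr
            _ = 4 * μ W := by ring
        exact absurd hfinal (lt_irrefl _)
      obtain ⟨z, hzW, hznEU⟩ := hzex
      have hz1 : |f z - cV| < lam := by
        by_contra hcon
        push_neg at hcon
        exact hznEU (Or.inl ⟨hWsub hzW, hcon⟩)
      have hz2 : |f z - cU| < lam := by
        by_contra hcon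
        push_neg at hcon
        exact hznEU (Or.inr ⟨hWsubU hzW, hcon⟩)
      have hcc : |cV - cU| < 2*lam := by
        have h0 : cV - cU = (f z - cU) - (f z - cV) := by ring
        have habs : |cV - cU| ≤ |f z - cU| + |f z - cV| := by
          rw [h0]; exact abs_sub _ _
        linarith
      refine ⟨t, ht0, htlt, htS.2, ?_⟩
      have hsubset : {v ∈ ball w (4*t) | (1+2*((k:ℝ)+1))*lam ≤ |f v - cV|}
          ⊆ {v ∈ ball w ((8*t)/2) | (1+2*(k:ℝ))*lam ≤ |f v - cU|} := by
        rintro v ⟨hv1, hv2⟩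
        have h82 : (8*t)/2 = 4*t := by ring
        refine ⟨by rw [h82]; exact hv1, ?_⟩
        have h0 : f v - cV = (f v - cU) - (cV - cU) := by ring
        have habs2 : |f v - cV| ≤ |f v - cU| + |cV - cU| := by
          rw [h0]; exact abs_sub _ _
        linarith
      exact le_trans (measure_mono hsubset) (ih w (8*t) (by linarith))
    -- choose radii
    choose! rad hrad0 hrads hraddens hradmeas using key2
    -- Vitali covering
    obtain ⟨u, husub, hudisj, hucov⟩ :=
      Vitali.exists_disjoint_subfamily_covering_enlargement
        (fun w => closedBall w (rad w)) (T ∩ D) rad (5/4) (by norm_num)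
        (fun w hw => (hrad0 w hw).le) (s/4) (fun w hw => (hrads w hw).le)
        (fun w hw => ⟨w, mem_closedBall_self (hrad0 w hw).le⟩)
    -- u is countable
    have hucnt : u.Countable := by
      have hmeas : ∀ b : u, MeasurableSet (closedBall (b:X) (rad b)) :=
        fun b => measurableSet_closedBall
      have hdisj2 : Pairwise (Function.onFun Disjoint (fun b : u => closedBall (b:X) (rad b))) :=
        fun i j hij => hudisj i.2 j.2 (Subtype.coe_injective.ne hij)
      have hsub : ⋃ b : u, closedBall (b:X) (rad b) ⊆ ball y s := by
        intro z hz
        obtain ⟨b, hb⟩ := mem_iUnion.1 hz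
        have hbu := husub b.2
        have h1 : (b:X) ∈ ball y (s/2) := hbu.1.1
        have h2 : rad (b:X) < s/4 := hrads (b:X) hbu
        rw [mem_closedBall] at hb
        rw [mem_ball] at h1 ⊢
        have := dist_triangle z (b:X) y
        linarith
      have hfin2 : μ (⋃ b : u, closedBall (b:X) (rad b)) ≠ ⊤ :=
        (lt_of_le_of_lt (measure_mono hsub) (hfin y s hs)).ne
      have hcnt := MeasureTheory.Measure.countable_meas_pos_of_disjoint_of_meas_iUnion_ne_top
        μ hmeas hdisj2 hfin2
      have hall : {b : u | 0 < μ (closedBall (b:X) (rad b))} = Set.univ :=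
        Set.eq_univ_of_forall (fun b => lt_of_lt_of_le
          (hpos (b:X) (rad (b:X)) (hrad0 (b:X) (husub b.2)))
          (measure_mono ball_subset_closedBall))
      rw [hall] at hcnt
      rw [← Set.countable_coe_iff]
      exact Set.countable_univ_iff.1 hcnt
    -- covering of T ∩ D
    have hcov2 : T ∩ D ⊆ ⋃ b ∈ u,
        {v ∈ ball b (4 * rad b) | (1+2*((k:ℝ)+1))*lam ≤ |f v - cV|} := by
      intro w hw
      obtain ⟨b, hbu, hnein, hle⟩ := hucov w hw
      refine mem_biUnion hbu ⟨?_, hw.1.2⟩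
      obtain ⟨p, hp1, hp2⟩ := hnein
      rw [mem_closedBall] at hp1 hp2
      have hb0 : 0 < rad b := hrad0 b (husub hbu)
      rw [mem_ball]
      have h1 := dist_triangle w p b
      have h2 := dist_comm w p
      have h3 := dist_comm p w
      calc dist w b ≤ dist w p + dist p b := dist_triangle w p b
        _ ≤ rad w + rad b := by rw [dist_comm w p]; exact add_le_add hp1 hp2
        _ ≤ (5/4) * rad b + rad b := add_le_add_left hle _
        _ < 4 * rad b := by linarith
    -- per-ball bound
    have hbound : ∀ b : u, μ {v ∈ ball (b:X) (4 * rad b) | (1+2*((k:ℝ)+1))*lam ≤ |f v - cV|}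
        ≤ ((2*κ^3*g)^k * g * κ^3 * 2) * μ (E ∩ closedBall (b:X) (rad b)) := by
      intro b
      have hbu := husub b.2
      refine le_trans (hradmeas (b:X) hbu) ?_
      have h2 : μ (ball (b:X) (8 * rad b)) ≤ κ^3 * μ (ball (b:X) (rad b)) :=
        aux_cmp μ κ hdb 3 _ (hrad0 (b:X) hbu) (le_of_eq (by ring))
      have h3 : μ (ball (b:X) (rad b)) ≤ 2 * μ (E ∩ closedBall (b:X) (rad b)) :=
        le_trans (measure_mono ball_subset_closedBall) (hraddens (b:X) hbu)
      calc (2*κ^3*g)^k * (g * μ (ball (b:X) (8 * rad b)))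
          ≤ (2*κ^3*g)^k * (g * (κ^3 * (2 * μ (E ∩ closedBall (b:X) (rad b))))) := by
            gcongr
            exact le_trans h2 (by gcongr)
        _ = ((2*κ^3*g)^k * g * κ^3 * 2) * μ (E ∩ closedBall (b:X) (rad b)) := by ring
    have hEdisj : u.PairwiseDisjoint (fun b => E ∩ closedBall b (rad b)) :=
      fun i hi j hj hij => (hudisj hi hj hij).mono inter_subset_right inter_subset_right
    have hsum : ∑' (b : u), μ (E ∩ closedBall (b:X) (rad b)) ≤ g * μ (ball y s) := by
      rw [← measure_biUnion hucnt hEdisj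
        (fun b _ => hEmeas.inter measurableSet_closedBall)]
      exact le_trans (measure_mono (iUnion₂_subset fun b _ => inter_subset_left)) hEle
    have hmain : μ (T ∩ D) ≤ (2*κ^3*g)^(k+1) * (g * μ (ball y s)) := by
      refine le_trans (measure_mono hcov2) ?_
      refine le_trans (measure_biUnion_le μ hucnt _) ?_
      refine le_trans (ENNReal.tsum_le_tsum (fun b => hbound b)) ?_
      rw [ENNReal.tsum_mul_left]
      calc ((2*κ^3*g)^k * g * κ^3 * 2) * ∑' (b : u), μ (E ∩ closedBall (b:X) (rad b))
          ≤ ((2*κ^3*g)^k * g * κ^3 * 2) * (g * μ (ball y s)) := by gcongr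
        _ = (2*κ^3*g)^(k+1) * (g * μ (ball y s)) := by ring
    calc μ T ≤ μ ((T ∩ D) ∪ (N ∩ E)) := by
          refine measure_mono ?_
          intro v hv
          by_cases hD : v ∈ D
          · exact Or.inl ⟨hv, hD⟩
          · exact Or.inr ⟨subset_toMeasurable _ _ hD, hTE hv⟩
      _ ≤ μ (T ∩ D) + μ (N ∩ E) := measure_union_le _ _
      _ = μ (T ∩ D) := by rw [hNE, add_zero]
      _ ≤ (2*κ^3*g)^(k+1) * (g * μ (ball y s)) := hmain

private lemma aux_geom : ∀ k : ℕ, (3+2*(k:ℝ)) ≤ 6*(4/3)^k := by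
  intro k
  induction k with
  | zero => norm_num
  | succ k ih =>
    have h1 : (1:ℝ) ≤ (4/3)^k := one_le_pow₀ (by norm_num)
    push_cast at ih ⊢
    have h2 : (4/3:ℝ)^(k+1) = (4/3)*(4/3)^k := by ring
    rw [h2]
    nlinarith

section Main

variable {X : Type} [MetricSpace X] [CompleteSpace X] [MeasurableSpace X] [BorelSpace X]

/-- The per-ball integral estimate. -/
private lemma aux_integral
    [SecondCountableTopology X]
    (μ : Measure X) [IsUnifLocDoublingMeasure μ] [IsLocallyFiniteMeasure μ]
    (hpos : ∀ (x : X) (r : ℝ), 0 < r → 0 < μ (ball x r))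
    (hfin : ∀ (x : X) (r : ℝ), 0 < r → μ (ball x r) < ⊤)
    (κ : ℝ≥0∞) (hκ : κ ≠ ⊤) (hκ1 : 1 ≤ κ)
    (hdb : ∀ (x : X) (r : ℝ), 0 < r → μ (ball x (2*r)) ≤ κ * μ (ball x r))
    (g : ℝ≥0∞)
    (hq : 2 * κ^3 * g ≤ 2⁻¹)
    (hgκ2 : κ^2 * g ≤ 4⁻¹)
    (hgκ : κ * g ≤ 1)
    (f : X → ℝ) (hf : Measurable f)
    (lam : ℝ) (hlam : 0 < lam)
    (c : X → ℝ → ℝ)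
    (hc : ∀ (x : X) (r : ℝ), 0 < r →
      μ {v ∈ ball x r | lam ≤ |f v - c x r|} ≤ g * μ (ball x r))
    (x : X) (r : ℝ) (hr : 0 < r) :
    ∫⁻ v in ball x r, ENNReal.ofReal |f v - c x (2*r)| ∂μ
      ≤ 19 * ENNReal.ofReal lam * μ (ball x r) := by
  have key := stromberg_key μ hpos hfin κ hκ hdb g hq hgκ2 f hf lam hlam c hc
  set B := ball x r with hBdef
  set cB := c x (2*r) with hcBdef
  set A : ℕ → Set X := fun k => {v ∈ B | (1+2*(k:ℝ))*lam ≤ |f v - cB|} with hAdef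
  have hAmeas : ∀ k, MeasurableSet (A k) :=
    fun k => measurableSet_ball.inter
      (measurableSet_le measurable_const ((hf.sub_const cB).abs))
  have hAk : ∀ k, μ (A k) ≤ (2⁻¹)^k * (g * (κ * μ B)) := by
    intro k
    have h1 := key k x (2*r) (by linarith)
    have h22 : (2*r)/2 = r := by ring
    rw [h22] at h1
    refine le_trans h1 ?_
    have h2 : μ (ball x (2*r)) ≤ κ * μ B := hdb x r hr
    exact mul_le_mul' (pow_le_pow_left' hq k) (mul_le_mul' le_rfl h2)
  -- decomposition of B
  have hdecomp : B ⊆ ((B \ A 0) ∪ (⋃ k, (A k \ A (k+1)))) ∪ (⋂ k, A k) := by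
    classical
    intro v hv
    by_cases h0 : v ∈ A 0
    · by_cases hall : ∀ k, v ∈ A k
      · exact Or.inr (mem_iInter.2 hall)
      · push_neg at hall
        have hn := Nat.find_spec hall
        have hn0 : Nat.find hall ≠ 0 := by
          intro h
          rw [h] at hn
          exact hn h0
        obtain ⟨m, hm⟩ := Nat.exists_eq_succ_of_ne_zero hn0
        refine Or.inl (Or.inr (mem_iUnion.2 ⟨m, ?_, ?_⟩))
        · have h5 := Nat.find_min hall (show m < Nat.find hall by omega)
          exact not_not.1 h5
        · rw [hm] at hn
          exact hn
    · exact Or.inl (Or.inl ⟨hv, h0⟩)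
  have hgfin : g * (κ * μ B) ≠ ⊤ := by
    have hg1 : g ≤ 2⁻¹ := by
      refine le_trans ?_ hq
      refine le_mul_of_one_le_left zero_le ?_
      calc (1:ℝ≥0∞) ≤ 2 * 1 := by norm_num
        _ ≤ 2 * κ^3 := by gcongr; exact one_le_pow₀ hκ1
    exact ENNReal.mul_ne_top (lt_of_le_of_lt hg1 (by norm_num)).ne
      (ENNReal.mul_ne_top hκ (hfin x r hr).ne)
  -- piece 1
  have hS1 : ∫⁻ v in B \ A 0, ENNReal.ofReal |f v - cB| ∂μ ≤ ENNReal.ofReal lam * μ B := by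
    have hb : ∀ᵐ v ∂(μ.restrict (B \ A 0)),
        ENNReal.ofReal |f v - cB| ≤ ENNReal.ofReal lam := by
      rw [ae_restrict_iff' (measurableSet_ball.diff (hAmeas 0))]
      refine Eventually.of_forall (fun v hv => ?_)
      refine ENNReal.ofReal_le_ofReal ?_
      have h1 : ¬ ((1+2*((0:ℕ):ℝ))*lam ≤ |f v - cB|) := fun h => hv.2 ⟨hv.1, h⟩
      push_neg at h1
      push_cast at h1
      linarith
    calc ∫⁻ v in B \ A 0, ENNReal.ofReal |f v - cB| ∂μ
        ≤ ∫⁻ _v in B \ A 0, ENNReal.ofReal lam ∂μ := lintegral_mono_ae hb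
      _ = ENNReal.ofReal lam * μ (B \ A 0) := by
          rw [lintegral_const, Measure.restrict_apply_univ]
      _ ≤ ENNReal.ofReal lam * μ B := by gcongr; exact diff_subset
  -- pieces k
  have hS2 : ∀ k : ℕ, ∫⁻ v in A k \ A (k+1), ENNReal.ofReal |f v - cB| ∂μ
      ≤ ENNReal.ofReal ((3+2*(k:ℝ))*lam) * ((2⁻¹)^k * (g * (κ * μ B))) := by
    intro k
    have hb : ∀ᵐ v ∂(μ.restrict (A k \ A (k+1))),
        ENNReal.ofReal |f v - cB| ≤ ENNReal.ofReal ((3+2*(k:ℝ))*lam) := by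
      rw [ae_restrict_iff' ((hAmeas k).diff (hAmeas (k+1)))]
      refine Eventually.of_forall (fun v hv => ?_)
      refine ENNReal.ofReal_le_ofReal ?_
      have h1 : ¬ ((1+2*(((k+1):ℕ):ℝ))*lam ≤ |f v - cB|) := fun h => hv.2 ⟨hv.1.1, h⟩
      push_neg at h1
      push_cast at h1
      linarith
    calc ∫⁻ v in A k \ A (k+1), ENNReal.ofReal |f v - cB| ∂μ
        ≤ ∫⁻ _v in A k \ A (k+1), ENNReal.ofReal ((3+2*(k:ℝ))*lam) ∂μ := lintegral_mono_ae hb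
      _ = ENNReal.ofReal ((3+2*(k:ℝ))*lam) * μ (A k \ A (k+1)) := by
          rw [lintegral_const, Measure.restrict_apply_univ]
      _ ≤ ENNReal.ofReal ((3+2*(k:ℝ))*lam) * ((2⁻¹)^k * (g * (κ * μ B))) := by
          gcongr
          exact le_trans (measure_mono diff_subset) (hAk k)
  -- intersection is null
  have hS3 : μ (⋂ k, A k) = 0 := by
    have h1 : ∀ k : ℕ, μ (⋂ n, A n) ≤ (2⁻¹)^k * (g * (κ * μ B)) :=
      fun k => le_trans (measure_mono (iInter_subset _ k)) (hAk k)
    have h2 : Tendsto (fun k : ℕ => (2⁻¹:ℝ≥0∞)^k * (g*(κ*μ B))) atTop (𝓝 0) := by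
      have h3 := ENNReal.tendsto_pow_atTop_nhds_zero_of_lt_one
        (by norm_num : (2⁻¹:ℝ≥0∞) < 1)
      have h4 := ENNReal.Tendsto.mul_const h3 (Or.inr hgfin)
      simpa using h4
    exact le_antisymm (ge_of_tendsto h2 (Eventually.of_forall h1)) zero_le
  -- series bound
  have hterm : ∀ k : ℕ, ENNReal.ofReal ((3+2*(k:ℝ))*lam) * ((2⁻¹)^k * (g*(κ*μ B)))
      ≤ (ENNReal.ofReal (2/3))^k * (6 * (ENNReal.ofReal lam * (g * (κ * μ B)))) := by
    intro k
    have h1 : ENNReal.ofReal ((3+2*(k:ℝ))*lam)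
        ≤ ENNReal.ofReal (6*(4/3)^k) * ENNReal.ofReal lam := by
      rw [← ENNReal.ofReal_mul (by positivity)]
      refine ENNReal.ofReal_le_ofReal ?_
      exact mul_le_mul_of_nonneg_right (aux_geom k) hlam.le
    have h3 : (2⁻¹ : ℝ≥0∞) = ENNReal.ofReal (2⁻¹) := by
      rw [ENNReal.ofReal_inv_of_pos (by norm_num), ENNReal.ofReal_ofNat]
    have h2 : ENNReal.ofReal (6*(4/3)^k) * (2⁻¹:ℝ≥0∞)^k
        = 6 * (ENNReal.ofReal (2/3))^k := by
      rw [ENNReal.ofReal_mul (by norm_num), ENNReal.ofReal_pow (by norm_num), h3, mul_assoc,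
        ← mul_pow, ← ENNReal.ofReal_mul (by norm_num)]
      norm_num
    calc ENNReal.ofReal ((3+2*(k:ℝ))*lam) * ((2⁻¹)^k * (g*(κ*μ B)))
        ≤ (ENNReal.ofReal (6*(4/3)^k) * ENNReal.ofReal lam) * ((2⁻¹)^k * (g*(κ*μ B))) := by
          gcongr
      _ = (ENNReal.ofReal (6*(4/3)^k) * (2⁻¹:ℝ≥0∞)^k) * (ENNReal.ofReal lam * (g*(κ*μ B))) := by
          ring
      _ = (6 * (ENNReal.ofReal (2/3))^k) * (ENNReal.ofReal lam * (g*(κ*μ B))) := by rw [h2]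
      _ = (ENNReal.ofReal (2/3))^k * (6 * (ENNReal.ofReal lam * (g * (κ * μ B)))) := by ring
  have hgeo : ∑' k:ℕ, ((ENNReal.ofReal (2/3:ℝ)))^k = 3 := by
    rw [ENNReal.tsum_geometric]
    have he : (1:ℝ≥0∞) - ENNReal.ofReal (2/3) = ENNReal.ofReal (3⁻¹) := by
      rw [← ENNReal.ofReal_one, ← ENNReal.ofReal_sub _ (by norm_num : (0:ℝ) ≤ 2/3)]
      norm_num
    rw [he, ENNReal.ofReal_inv_of_pos (by norm_num), inv_inv, ENNReal.ofReal_ofNat]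
  have hseries : ∑' k : ℕ, (ENNReal.ofReal ((3+2*(k:ℝ))*lam) * ((2⁻¹)^k * (g*(κ*μ B))))
      ≤ 18 * ENNReal.ofReal lam * μ B := by
    refine le_trans (ENNReal.tsum_le_tsum hterm) ?_
    rw [ENNReal.tsum_mul_right, hgeo]
    have hfold : g * (κ * μ B) ≤ μ B := by
      calc g * (κ * μ B) = (κ * g) * μ B := by ring
        _ ≤ 1 * μ B := by gcongr
        _ = μ B := one_mul _
    calc (3:ℝ≥0∞) * (6 * (ENNReal.ofReal lam * (g * (κ * μ B))))
        ≤ 3 * (6 * (ENNReal.ofReal lam * μ B)) := by gcongr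
      _ = 18 * ENNReal.ofReal lam * μ B := by ring
  -- put together
  calc ∫⁻ v in B, ENNReal.ofReal |f v - cB| ∂μ
      ≤ ∫⁻ v in ((B \ A 0) ∪ (⋃ k, (A k \ A (k+1)))) ∪ (⋂ k, A k),
          ENNReal.ofReal |f v - cB| ∂μ := lintegral_mono_set hdecomp
    _ ≤ (∫⁻ v in (B \ A 0) ∪ (⋃ k, (A k \ A (k+1))), ENNReal.ofReal |f v - cB| ∂μ)
          + ∫⁻ v in (⋂ k, A k), ENNReal.ofReal |f v - cB| ∂μ := lintegral_union_le _ _ _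
    _ = ∫⁻ v in (B \ A 0) ∪ (⋃ k, (A k \ A (k+1))), ENNReal.ofReal |f v - cB| ∂μ := by
        rw [setLIntegral_measure_zero _ _ hS3, add_zero]
    _ ≤ (∫⁻ v in B \ A 0, ENNReal.ofReal |f v - cB| ∂μ)
          + ∫⁻ v in ⋃ k, (A k \ A (k+1)), ENNReal.ofReal |f v - cB| ∂μ :=
        lintegral_union_le _ _ _
    _ ≤ (ENNReal.ofReal lam * μ B)
          + ∑' k : ℕ, ∫⁻ v in A k \ A (k+1), ENNReal.ofReal |f v - cB| ∂μ := by
        exact add_le_add hS1 (lintegral_iUnion_le _ _)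
    _ ≤ (ENNReal.ofReal lam * μ B)
          + ∑' k : ℕ, ENNReal.ofReal ((3+2*(k:ℝ))*lam) * ((2⁻¹)^k * (g*(κ*μ B))) := by
        gcongr
        exact hS2 _
    _ ≤ (ENNReal.ofReal lam * μ B) + 18 * ENNReal.ofReal lam * μ B := by gcongr
    _ = 19 * ENNReal.ofReal lam * μ B := by ring

private lemma aux_osc
    [SecondCountableTopology X]
    (μ : Measure X) [IsUnifLocDoublingMeasure μ] [IsLocallyFiniteMeasure μ]
    (hpos : ∀ (x : X) (r : ℝ), 0 < r → 0 < μ (ball x r))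
    (hfin : ∀ (x : X) (r : ℝ), 0 < r → μ (ball x r) < ⊤)
    (κ : ℝ≥0∞) (hκ : κ ≠ ⊤) (hκ1 : 1 ≤ κ)
    (hdb : ∀ (x : X) (r : ℝ), 0 < r → μ (ball x (2*r)) ≤ κ * μ (ball x r))
    (g : ℝ≥0∞)
    (hq : 2 * κ^3 * g ≤ 2⁻¹)
    (hgκ2 : κ^2 * g ≤ 4⁻¹)
    (hgκ : κ * g ≤ 1)
    (f : X → ℝ) (hf : Measurable f)
    (lam : ℝ) (hlam : 0 < lam)
    (c : X → ℝ → ℝ)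
    (hc : ∀ (x : X) (r : ℝ), 0 < r →
      μ {v ∈ ball x r | lam ≤ |f v - c x r|} ≤ g * μ (ball x r))
    (x : X) (r : ℝ) (hr : 0 < r) :
    IntegrableOn f (ball x r) μ ∧ avgOsc μ f x r ≤ 38 * lam := by
  have hIB := aux_integral μ hpos hfin κ hκ hκ1 hdb g hq hgκ2 hgκ f hf lam hlam c hc x r hr
  set B := ball x r with hBdef
  set cB := c x (2*r) with hcBdef
  have hB0 : μ B ≠ 0 := (hpos x r hr).ne'
  have hBfin : μ B ≠ ⊤ := (hfin x r hr).ne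
  have hRHSfin : 19 * ENNReal.ofReal lam * μ B ≠ ⊤ :=
    ENNReal.mul_ne_top (ENNReal.mul_ne_top (by norm_num) ENNReal.ofReal_ne_top) hBfin
  set τ := (μ B).toReal with hτdef
  have hτ : 0 < τ := ENNReal.toReal_pos hB0 hBfin
  -- integrability of f - cB on B
  have hfc_int : IntegrableOn (fun v => f v - cB) B μ := by
    constructor
    · exact ((hf.sub_const cB).aestronglyMeasurable).restrict
    · rw [hasFiniteIntegral_iff_norm]
      refine lt_of_le_of_lt (le_of_eq ?_) (lt_of_le_of_lt hIB hRHSfin.lt_top)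
      refine lintegral_congr (fun v => ?_)
      rw [Real.norm_eq_abs]
  have hconst : ∀ a : ℝ, IntegrableOn (fun _ => a) B μ := by
    intro a
    refine integrableOn_const hBfin
  have hint : IntegrableOn f B μ := by
    have h := hfc_int.add (hconst cB)
    have he : (fun v => f v - cB + cB) = f := by funext v; ring
    rwa [← he]
  refine ⟨hint, ?_⟩
  -- real integral bound
  set J := ∫ v in B, |f v - cB| ∂μ with hJdef
  have hJ0 : 0 ≤ J := integral_nonneg (fun v => abs_nonneg _)
  have hJle : J ≤ 19 * lam * τ := by
    have h1 : J = (∫⁻ v in B, ENNReal.ofReal |f v - cB| ∂μ).toReal := by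
      rw [hJdef]
      rw [integral_eq_lintegral_of_nonneg_ae (Eventually.of_forall (fun v => abs_nonneg _))
        (((hf.sub_const cB).abs).aestronglyMeasurable).restrict]
    rw [h1]
    calc (∫⁻ v in B, ENNReal.ofReal |f v - cB| ∂μ).toReal
        ≤ (19 * ENNReal.ofReal lam * μ B).toReal := ENNReal.toReal_mono hRHSfin hIB
      _ = 19 * lam * τ := by
          rw [ENNReal.toReal_mul, ENNReal.toReal_mul, ENNReal.toReal_ofReal hlam.le]
          norm_num [hτdef]
  set m := ⨍ z in B, f z ∂μ with hmdef
  have havg : avgOsc μ f x r = τ⁻¹ * ∫ v in B, |f v - m| ∂μ := by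
    rw [avgOsc, setAverage_eq, smul_eq_mul, measureReal_def]
  have hm : m = τ⁻¹ * ∫ v in B, f v ∂μ := by
    rw [hmdef, setAverage_eq, smul_eq_mul, measureReal_def]
  -- |m - cB| ≤ τ⁻¹ * J
  have hsub_int : ∫ v in B, (f v - cB) ∂μ = (∫ v in B, f v ∂μ) - τ * cB := by
    rw [integral_sub hint (hconst cB), setIntegral_const, smul_eq_mul, measureReal_def]
  have hmc : m - cB = τ⁻¹ * ∫ v in B, (f v - cB) ∂μ := by
    rw [hsub_int, hm]
    field_simp
  have hdiff : |m - cB| ≤ τ⁻¹ * J := by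
    rw [hmc, abs_mul, abs_of_nonneg (inv_nonneg.2 hτ.le)]
    refine mul_le_mul_of_nonneg_left ?_ (inv_nonneg.2 hτ.le)
    calc |∫ v in B, (f v - cB) ∂μ| = ‖∫ v in B, (f v - cB) ∂μ‖ := (Real.norm_eq_abs _).symm
      _ ≤ ∫ v in B, ‖f v - cB‖ ∂μ := norm_integral_le_integral_norm _
      _ = J := by simp only [Real.norm_eq_abs, hJdef]
  -- pointwise bound and integral
  have hint_fm : IntegrableOn (fun v => |f v - m|) B μ := (hint.sub (hconst m)).abs
  have hstepA : ∫ v in B, |f v - m| ∂μ ≤ J + τ * |m - cB| := by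
    have h1 : ∫ v in B, |f v - m| ∂μ ≤ ∫ v in B, (|f v - cB| + |m - cB|) ∂μ := by
      refine integral_mono hint_fm (hfc_int.abs.add (hconst _)) (fun v => ?_)
      have h0 : f v - m = (f v - cB) - (m - cB) := by ring
      rw [h0]
      exact abs_sub _ _
    rw [integral_add hfc_int.abs (hconst _), setIntegral_const, smul_eq_mul, measureReal_def, ← hτdef] at h1
    linarith
  have hfm2J : ∫ v in B, |f v - m| ∂μ ≤ 2 * J := by
    have h2 : τ * |m - cB| ≤ J := by
      calc τ * |m - cB| ≤ τ * (τ⁻¹ * J) := mul_le_mul_of_nonneg_left hdiff hτ.le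
        _ = J := by field_simp
    linarith
  rw [havg]
  calc τ⁻¹ * ∫ v in B, |f v - m| ∂μ ≤ τ⁻¹ * (2 * J) :=
        mul_le_mul_of_nonneg_left hfm2J (inv_nonneg.2 hτ.le)
    _ ≤ τ⁻¹ * (2 * (19 * lam * τ)) := by
        refine mul_le_mul_of_nonneg_left ?_ (inv_nonneg.2 hτ.le)
        linarith
    _ = 38 * lam := by field_simp; ring

end Main



/-- Lemma 3.8, Strömberg-type lemma: there is `C > 0` depending only on
`c_D` such that if `inf_c μ({x ∈ B : |f(x) − c| ≥ λ}) ≤ γ μ(B)` for every ball `B`,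
with `0 < γ < (4 c_D³)⁻¹` and `λ > 0`, then `f ∈ BMO(X)` with `‖f‖_* ≤ C λ`. -/
theorem stromberg_lemma (cD : ℝ) (hcD : 1 < cD) :
    ∃ C : ℝ, 0 < C ∧
      ∀ (X : Type) [MetricSpace X] [CompleteSpace X] [MeasurableSpace X] [BorelSpace X]
        (μ : Measure X), IsDoublingWith μ cD →
      ∀ f : X → ℝ, Measurable f →
      ∀ γ lam : ℝ, 0 < γ → γ < (4 * cD ^ 3)⁻¹ → 0 < lam →
      (∀ (x : X) (r : ℝ), 0 < r →
        (⨅ c : ℝ, μ {y ∈ ball x r | lam ≤ |f y - c|}) ≤ ENNReal.ofReal γ * μ (ball x r)) →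
      MemBMO μ f ∧ bmoNorm μ f ≤ C * lam := by
  refine ⟨40, by norm_num, ?_⟩
  intro X mX cX msX bX μ hμ f hf γ lam hγ0 hγlt hlam hyp
  obtain ⟨hcD', hball, hdbl0⟩ := hμ
  have hpos : ∀ (x : X) (r : ℝ), 0 < r → 0 < μ (ball x r) := fun x r hr => (hball x r hr).1
  have hfin : ∀ (x : X) (r : ℝ), 0 < r → μ (ball x r) < ⊤ := fun x r hr => (hball x r hr).2
  have hcD0 : (0:ℝ) < cD := by linarith
  set κ : ℝ≥0∞ := ENNReal.ofReal cD with hκdef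
  have hκt : κ ≠ ⊤ := ENNReal.ofReal_ne_top
  have hκ1 : 1 ≤ κ := by
    rw [hκdef, ← ENNReal.ofReal_one]
    exact ENNReal.ofReal_le_ofReal hcD.le
  have hdb : ∀ (x : X) (r : ℝ), 0 < r → μ (ball x (2*r)) ≤ κ * μ (ball x r) := by
    intro x r hr
    exact hdbl0 x x r hr ⟨x, mem_ball_self (by linarith), mem_ball_self hr⟩
  haveI : IsUnifLocDoublingMeasure μ := aux_uldm μ hcD hdb
  haveI : IsLocallyFiniteMeasure μ :=
    ⟨fun x => ⟨ball x 1, ball_mem_nhds x one_pos, hfin x 1 one_pos⟩⟩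
  haveI : SecondCountableTopology X := aux_secondCountable μ hpos hfin κ hκt hdb
  have hcD3 : (0:ℝ) < 4*cD^3 := by positivity
  set γ' : ℝ := (γ + (4*cD^3)⁻¹)/2 with hγ'def
  have hinv0 : (0:ℝ) < (4*cD^3)⁻¹ := by positivity
  have hγ'0 : 0 < γ' := by rw [hγ'def]; positivity
  have hγγ' : γ < γ' := by rw [hγ'def]; linarith
  have hγ'lt : γ' < (4*cD^3)⁻¹ := by rw [hγ'def]; linarith
  have hγ'cD3 : γ' * (4*cD^3) < 1 := by
    have h := mul_lt_mul_of_pos_right hγ'lt hcD3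
    rwa [inv_mul_cancel₀ hcD3.ne'] at h
  set g : ℝ≥0∞ := ENNReal.ofReal γ' with hgdef
  have hq : 2 * κ^3 * g ≤ 2⁻¹ := by
    have he : 2 * κ^3 * g = ENNReal.ofReal (2*cD^3*γ') := by
      rw [hκdef, hgdef, ← ENNReal.ofReal_pow hcD0.le,
        ENNReal.ofReal_mul (by positivity), ENNReal.ofReal_mul (by norm_num),
        ENNReal.ofReal_ofNat]
    rw [he]
    have h2 : 2*cD^3*γ' ≤ 2⁻¹ := by nlinarith
    calc ENNReal.ofReal (2*cD^3*γ') ≤ ENNReal.ofReal 2⁻¹ := ENNReal.ofReal_le_ofReal h2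
      _ = 2⁻¹ := by rw [ENNReal.ofReal_inv_of_pos (by norm_num), ENNReal.ofReal_ofNat]
  have hgκ2 : κ^2 * g ≤ 4⁻¹ := by
    have he : κ^2 * g = ENNReal.ofReal (cD^2*γ') := by
      rw [hκdef, hgdef, ← ENNReal.ofReal_pow hcD0.le, ENNReal.ofReal_mul (by positivity)]
    rw [he]
    have h2 : cD^2*γ' ≤ 4⁻¹ := by nlinarith
    calc ENNReal.ofReal (cD^2*γ') ≤ ENNReal.ofReal 4⁻¹ := ENNReal.ofReal_le_ofReal h2
      _ = 4⁻¹ := by rw [ENNReal.ofReal_inv_of_pos (by norm_num), ENNReal.ofReal_ofNat]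
  have hgκ : κ * g ≤ 1 := by
    have he : κ * g = ENNReal.ofReal (cD*γ') := by
      rw [hκdef, hgdef, ENNReal.ofReal_mul (by positivity)]
    rw [he]
    have hc3 : cD ≤ cD^3 := by nlinarith [sq_nonneg cD, sq_nonneg (cD-1)]
    have h2 : cD*γ' ≤ 1 := by nlinarith [mul_le_mul_of_nonneg_right hc3 hγ'0.le]
    calc ENNReal.ofReal (cD*γ') ≤ ENNReal.ofReal 1 := ENNReal.ofReal_le_ofReal h2
      _ = 1 := ENNReal.ofReal_one
  have hcex : ∀ (x : X) (r : ℝ), 0 < r → ∃ a : ℝ,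
      μ {v ∈ ball x r | lam ≤ |f v - a|} ≤ g * μ (ball x r) := by
    intro x r hr
    have h1 : (⨅ a : ℝ, μ {v ∈ ball x r | lam ≤ |f v - a|}) < g * μ (ball x r) := by
      refine lt_of_le_of_lt (hyp x r hr) ?_
      rw [hgdef]
      exact (ENNReal.mul_lt_mul_iff_left (hpos x r hr).ne' (hfin x r hr).ne).2
        ((ENNReal.ofReal_lt_ofReal_iff hγ'0).2 hγγ')
    obtain ⟨a, ha⟩ := iInf_lt_iff.1 h1
    exact ⟨a, ha.le⟩
  choose! c hc using hcex
  have hosc := fun (x : X) (r : ℝ) (hr : 0 < r) =>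
    aux_osc μ hpos hfin κ hκt hκ1 hdb g hq hgκ2 hgκ f hf lam hlam c hc x r hr
  refine ⟨⟨fun x => ⟨ball x 1, ball_mem_nhds x one_pos, (hosc x 1 one_pos).1⟩, ?_⟩, ?_⟩
  · refine ⟨40*lam, ?_⟩
    rintro a ⟨x, r, hr, rfl⟩
    have h := (hosc x r hr).2
    linarith
  · refine Real.sSup_le ?_ (by positivity)
    rintro a ⟨x, r, hr, rfl⟩
    have h := (hosc x r hr).2
    linarith
end

section
/- Let λ > 1 and let E₁, …, E_N (N ≥ 2) be μ-measurable subsets of X such that min_{1 ≤ j ≤ N} μ(E_j ∩ B)/μ(B) ≤ c_D^{−4λ} for every ball B ⊂ X. Then μ(⋂_{j=1}^{N} E_j) = 0. -/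
open MeasureTheory Metric ENNReal

section Aux

open Filter

variable {X : Type*} [MetricSpace X] [MeasurableSpace X] [OpensMeasurableSpace X] {μ : Measure X} {cD : ℝ}

/-- Same-center doubling. -/
lemma dbl_same (hμ : IsDoublingWith μ cD) (x : X) (r : ℝ) (hr : 0 < r) :
    μ (ball x (2 * r)) ≤ ENNReal.ofReal cD * μ (ball x r) :=
  hμ.2.2 x x r hr ⟨x, mem_ball_self (by linarith), mem_ball_self hr⟩

lemma dbl_iter (hμ : IsDoublingWith μ cD) (k : ℕ) (x : X) (r : ℝ) (hr : 0 < r) :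
    μ (ball x (2 ^ k * r)) ≤ (ENNReal.ofReal cD) ^ k * μ (ball x r) := by
  induction k with
  | zero => simp
  | succ n ih =>
    have h1 : (2 : ℝ) ^ (n + 1) * r = 2 * (2 ^ n * r) := by ring
    rw [h1]
    calc μ (ball x (2 * (2 ^ n * r)))
        ≤ ENNReal.ofReal cD * μ (ball x (2 ^ n * r)) := dbl_same hμ x _ (by positivity)
      _ ≤ ENNReal.ofReal cD * ((ENNReal.ofReal cD) ^ n * μ (ball x r)) :=
          mul_le_mul_right ih _
      _ = (ENNReal.ofReal cD) ^ (n + 1) * μ (ball x r) := by ring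

/-- Comparison of measures of concentric balls, with a constant independent of the center. -/
lemma dbl_compare (hμ : IsDoublingWith μ cD) (r R : ℝ) (hr : 0 < r) :
    ∃ c : ℝ≥0∞, c ≠ 0 ∧ c ≠ ⊤ ∧ ∀ x : X, μ (ball x R) ≤ c * μ (ball x r) := by
  have hcD0 : (0 : ℝ) < cD := lt_trans one_pos hμ.1
  obtain ⟨k, hk⟩ := pow_unbounded_of_one_lt (R / r) (one_lt_two (α := ℝ))
  refine ⟨(ENNReal.ofReal cD) ^ k, ?_, ?_, fun x => ?_⟩
  · exact pow_ne_zero _ (ENNReal.ofReal_pos.2 hcD0).ne'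
  · exact ENNReal.pow_ne_top ENNReal.ofReal_ne_top
  · have hRk : R ≤ 2 ^ k * r := by
      have := (div_lt_iff₀ hr).1 hk
      linarith
    exact (measure_mono (ball_subset_ball hRk)).trans (dbl_iter hμ k x r hr)

/-- A separated subset of a ball is finite. -/
lemma finite_of_separated (hμ : IsDoublingWith μ cD) (x₀ : X) (R ε : ℝ) (hε : 0 < ε)
    (s : Set X) (hsub : s ⊆ ball x₀ R) (hsep : s.Pairwise fun a b => ε ≤ dist a b) :
    s.Finite := by
  by_contra hinf
  have hinf' : s.Infinite := hinf
  obtain f := hinf'.natEmbedding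
  have hy : ∀ i : ℕ, (f i : X) ∈ ball x₀ R := fun i => hsub (f i).2
  have hR : 0 < R := pos_of_mem_ball (hy 0)
  obtain ⟨c, hc0, hctop, hc⟩ := dbl_compare hμ (ε / 2) (2 * R + ε) (by positivity)
  set T := μ (ball x₀ (R + ε)) with hT
  have hT0 : 0 < T := (hμ.2.1 x₀ (R + ε) (by positivity)).1
  have hTtop : T < ⊤ := (hμ.2.1 x₀ (R + ε) (by positivity)).2
  -- each small ball has measure at least T / c
  have hlow : ∀ i : ℕ, T / c ≤ μ (ball (f i : X) (ε / 2)) := by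
    intro i
    have h1 : ball x₀ (R + ε) ⊆ ball (f i : X) (2 * R + ε) := by
      intro z hz
      have h2 := mem_ball.1 hz
      have h3 := mem_ball.1 (hy i)
      rw [mem_ball]
      calc dist z (f i : X) ≤ dist z x₀ + dist x₀ (f i : X) := dist_triangle _ _ _
        _ < (R + ε) + R := by rw [dist_comm x₀]; linarith
        _ = 2 * R + ε := by ring
    have h4 : T ≤ c * μ (ball (f i : X) (ε / 2)) :=
      (measure_mono h1).trans (hc _)
    exact ENNReal.div_le_of_le_mul (by rwa [mul_comm] at h4)
  -- small balls are pairwise disjoint and contained in the big ball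
  have hdisj : ∀ i j : ℕ, i ≠ j →
      Disjoint (ball (f i : X) (ε / 2)) (ball (f j : X) (ε / 2)) := by
    intro i j hij
    apply ball_disjoint_ball
    have hne : (f i : X) ≠ (f j : X) := fun hcontra =>
      hij (f.injective (Subtype.ext hcontra))
    have := hsep (f i).2 (f j).2 hne
    linarith
  have hsubbig : ∀ i : ℕ, ball (f i : X) (ε / 2) ⊆ ball x₀ (R + ε) := by
    intro i z hz
    have h2 := mem_ball.1 hz
    have h3 := mem_ball.1 (hy i)
    rw [mem_ball]
    calc dist z x₀ ≤ dist z (f i : X) + dist (f i : X) x₀ := dist_triangle _ _ _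
      _ < ε / 2 + R := by linarith
      _ ≤ R + ε := by linarith
  -- sum up
  have hsum : ∀ m : ℕ, (m : ℝ≥0∞) * (T / c) ≤ T := by
    intro m
    have hmeas : ∀ i ∈ Finset.range m, MeasurableSet (ball (f i : X) (ε / 2)) :=
      fun i _ => measurableSet_ball
    have hpd : (↑(Finset.range m) : Set ℕ).PairwiseDisjoint
        fun i => ball (f i : X) (ε / 2) := fun i _ j _ hij => hdisj i j hij
    have := measure_biUnion_finset (μ := μ) hpd fun i _ => measurableSet_ball
    calc (m : ℝ≥0∞) * (T / c)
        = ∑ _i ∈ Finset.range m, (T / c) := by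
          simp [Finset.sum_const, nsmul_eq_mul]
      _ ≤ ∑ i ∈ Finset.range m, μ (ball (f i : X) (ε / 2)) :=
          Finset.sum_le_sum fun i _ => hlow i
      _ = μ (⋃ i ∈ Finset.range m, ball (f i : X) (ε / 2)) := this.symm
      _ ≤ T := measure_mono (by
          intro z hz
          simp only [Set.mem_iUnion] at hz
          obtain ⟨i, _, hzi⟩ := hz
          exact hsubbig i hzi)
  have hTc0 : T / c ≠ 0 := by
    rw [ne_eq, ENNReal.div_eq_zero_iff]
    push_neg
    exact ⟨hT0.ne', hctop⟩
  have hTctop : T / c ≠ ⊤ := by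
    apply ne_of_lt
    exact ENNReal.div_lt_top hTtop.ne hc0
  obtain ⟨n, hn⟩ := ENNReal.exists_nat_gt (ENNReal.div_lt_top hTtop.ne hTc0).ne
  have : T < (n : ℝ≥0∞) * (T / c) := by
    rw [← ENNReal.div_lt_iff (Or.inl hTc0) (Or.inl hTctop)]
    exact hn
  exact absurd (hsum n) (not_le.2 this)

/-- A countable `ε`-net for a ball. -/
lemma exists_net (hμ : IsDoublingWith μ cD) (x₀ : X) (R ε : ℝ) (hε : 0 < ε) :
    ∃ s : Set X, s.Countable ∧ ∀ x ∈ ball x₀ R, ∃ y ∈ s, dist x y ≤ ε := by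
  set F : Set (Set X) := {s | s ⊆ ball x₀ R ∧ s.Pairwise fun a b => ε ≤ dist a b} with hF
  obtain ⟨m, hm⟩ := zorn_subset F (by
    intro c hcF hchain
    refine ⟨⋃₀ c, ⟨?_, ?_⟩, fun s hs => Set.subset_sUnion_of_mem hs⟩
    · exact Set.sUnion_subset fun s hs => (hcF hs).1
    · intro a ha b hb hab
      obtain ⟨sa, hsa, hasa⟩ := ha
      obtain ⟨sb, hsb, hbsb⟩ := hb
      rcases hchain.total hsa hsb with h | h
      · exact (hcF hsb).2 (h hasa) hbsb hab
      · exact (hcF hsa).2 hasa (h hbsb) hab)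
  refine ⟨m, (finite_of_separated hμ x₀ R ε hε m hm.prop.1 hm.prop.2).countable,
    fun x hx => ?_⟩
  by_contra hcon
  push_neg at hcon
  have hxm : x ∉ m := fun hxm => by
    have := hcon x hxm
    simp at this
    linarith
  have hins : insert x m ∈ F := by
    constructor
    · exact Set.insert_subset hx hm.prop.1
    · apply Set.Pairwise.insert hm.prop.2
      intro b hb hbx
      constructor
      · exact le_of_lt (hcon b hb)
      · rw [dist_comm]; exact le_of_lt (hcon b hb)
  have := hm.2 hins (Set.subset_insert x m)
  exact hxm (this (Set.mem_insert x m))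

lemma secondCountable_of_doubling (hμ : IsDoublingWith μ cD) :
    SecondCountableTopology X := by
  rcases isEmpty_or_nonempty X with hX | hX
  · exact Metric.secondCountable_of_almost_dense_set fun ε hε =>
      ⟨∅, Set.countable_empty, fun x => (IsEmpty.false x).elim⟩
  · obtain ⟨x₀⟩ := hX
    apply Metric.secondCountable_of_almost_dense_set
    intro ε hε
    choose s hsc hsd using fun n : ℕ => exists_net hμ x₀ (n : ℝ) ε hε
    refine ⟨⋃ n, s n, Set.countable_iUnion hsc, fun x => ?_⟩
    obtain ⟨n, hn⟩ := exists_nat_gt (dist x x₀)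
    obtain ⟨y, hy, hxy⟩ := hsd n x (mem_ball.2 hn)
    exact ⟨y, Set.mem_iUnion.2 ⟨n, hy⟩, hxy⟩

lemma unifLocDoubling_of_doubling (hμ : IsDoublingWith μ cD) :
    IsUnifLocDoublingMeasure μ := by
  have hcD0 : (0 : ℝ) < cD := lt_trans one_pos hμ.1
  refine ⟨⟨(cD * cD).toNNReal, ?_⟩⟩
  filter_upwards [self_mem_nhdsWithin] with ε (hε : 0 < ε)
  intro x
  have h1 : μ (closedBall x (2 * ε)) ≤ μ (ball x (2 * (2 * ε))) :=
    measure_mono (closedBall_subset_ball (by linarith))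
  have h2 : μ (ball x (2 * (2 * ε))) ≤ ENNReal.ofReal cD * μ (ball x (2 * ε)) :=
    dbl_same hμ x (2 * ε) (by linarith)
  have h3 : μ (ball x (2 * ε)) ≤ ENNReal.ofReal cD * μ (ball x ε) :=
    dbl_same hμ x ε hε
  have h4 : μ (ball x ε) ≤ μ (closedBall x ε) := measure_mono ball_subset_closedBall
  have hcoe : ((cD * cD).toNNReal : ℝ≥0∞) = ENNReal.ofReal cD * ENNReal.ofReal cD := by
    rw [← ENNReal.ofReal_mul hcD0.le]; rfl
  calc μ (closedBall x (2 * ε))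
      ≤ ENNReal.ofReal cD * μ (ball x (2 * ε)) := h1.trans h2
    _ ≤ ENNReal.ofReal cD * (ENNReal.ofReal cD * μ (ball x ε)) := mul_le_mul_right h3 _
    _ ≤ ENNReal.ofReal cD * (ENNReal.ofReal cD * μ (closedBall x ε)) := by
        exact mul_le_mul_right (mul_le_mul_right h4 _) _
    _ = ((cD * cD).toNNReal : ℝ≥0∞) * μ (closedBall x ε) := by
        rw [hcoe, mul_assoc]

end Aux

open Filter

/-- under the hypothesis of Uchiyama's construction, the sets
`E₁, …, E_N` have a null intersection. -/
theorem inter_null {X : Type*} [MetricSpace X] [CompleteSpace X] [MeasurableSpace X]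
    [BorelSpace X] (μ : Measure X) (cD : ℝ) (hμ : IsDoublingWith μ cD)
    (N : ℕ) (hN : 2 ≤ N) (lam : ℝ) (hlam : 1 < lam)
    (E : Fin N → Set X) (hE : ∀ j, MeasurableSet (E j))
    (h : ∀ (x : X) (r : ℝ), 0 < r →
      ∃ j, μ (E j ∩ ball x r) / μ (ball x r) ≤ ENNReal.ofReal (cD ^ (-(4 * lam)))) :
    μ (⋂ j, E j) = 0 := by
  have hcD1 : 1 < cD := hμ.1
  have hcD0 : (0 : ℝ) < cD := lt_trans one_pos hcD1
  haveI : SecondCountableTopology X := secondCountable_of_doubling hμ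
  haveI : IsUnifLocDoublingMeasure μ := unifLocDoubling_of_doubling hμ
  haveI : IsLocallyFiniteMeasure μ :=
    ⟨fun x => ⟨ball x 1, ball_mem_nhds x one_pos, (hμ.2.1 x 1 one_pos).2⟩⟩
  set S : Set X := ⋂ j, E j with hSdef
  have hSmeas : MeasurableSet S := MeasurableSet.iInter fun j => hE j
  set c' : ℝ≥0∞ := ENNReal.ofReal (cD ^ (-(4 * lam)) * cD) with hc'def
  have hc'lt : c' < 1 := by
    rw [hc'def, ENNReal.ofReal_lt_one]
    have heq : cD ^ (-(4 * lam)) * cD = cD ^ (1 - 4 * lam) := by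
      rw [show (1 : ℝ) - 4 * lam = -(4 * lam) + 1 by ring, Real.rpow_add hcD0,
        Real.rpow_one]
    rw [heq]
    exact Real.rpow_lt_one_of_one_lt_of_neg hcD1 (by linarith)
  -- key estimate on closed balls
  have hkey : ∀ (x : X) (r : ℝ), 0 < r →
      μ (S ∩ closedBall x r) ≤ c' * μ (closedBall x r) := by
    intro x r hr
    obtain ⟨j, hj⟩ := h x (2 * r) (by linarith)
    have hBpos : μ (ball x (2 * r)) ≠ 0 := (hμ.2.1 x (2 * r) (by linarith)).1.ne'
    have hBtop : μ (ball x (2 * r)) ≠ ⊤ := (hμ.2.1 x (2 * r) (by linarith)).2.ne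
    have hj' : μ (E j ∩ ball x (2 * r)) ≤
        ENNReal.ofReal (cD ^ (-(4 * lam))) * μ (ball x (2 * r)) :=
      (ENNReal.div_le_iff hBpos hBtop).1 hj
    calc μ (S ∩ closedBall x r)
        ≤ μ (S ∩ ball x (2 * r)) := by
          apply measure_mono
          exact Set.inter_subset_inter_right S (closedBall_subset_ball (by linarith))
      _ ≤ μ (E j ∩ ball x (2 * r)) := by
          apply measure_mono
          exact Set.inter_subset_inter_left _ (Set.iInter_subset E j)
      _ ≤ ENNReal.ofReal (cD ^ (-(4 * lam))) * μ (ball x (2 * r)) := hj'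
      _ ≤ ENNReal.ofReal (cD ^ (-(4 * lam))) * (ENNReal.ofReal cD * μ (ball x r)) :=
          mul_le_mul_right (dbl_same hμ x r hr) _
      _ = c' * μ (ball x r) := by
          rw [hc'def, ENNReal.ofReal_mul (Real.rpow_nonneg hcD0.le _), mul_assoc]
      _ ≤ c' * μ (closedBall x r) :=
          mul_le_mul_right (measure_mono ball_subset_closedBall) _
  -- conclude via the density theorem
  by_contra h0
  have hae := IsUnifLocDoublingMeasure.ae_tendsto_measure_inter_div μ S 1
  haveI : NeBot (ae (μ.restrict S)) := by
    rw [ae_neBot]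
    intro hcon
    apply h0
    have := Measure.restrict_apply_univ (μ := μ) S
    rw [hcon] at this
    simpa using this.symm
  obtain ⟨x, hx⟩ := hae.exists
  have hmem : ∀ᶠ r in nhdsWithin (0 : ℝ) (Set.Ioi 0),
      x ∈ closedBall ((fun _ : ℝ => x) r) (1 * r) := by
    filter_upwards [self_mem_nhdsWithin] with r (hr : 0 < r)
    simp [mem_closedBall]
    linarith
  have ht := hx (fun _ : ℝ => x) id tendsto_id hmem
  have hev : ∀ᶠ r in nhdsWithin (0 : ℝ) (Set.Ioi 0),
      μ (S ∩ closedBall x (id r)) / μ (closedBall x (id r)) ≤ c' := by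
    filter_upwards [self_mem_nhdsWithin] with r (hr : 0 < r)
    exact ENNReal.div_le_of_le_mul (hkey x r hr)
  have hle : (1 : ℝ≥0∞) ≤ c' := le_of_tendsto ht hev
  exact absurd hle (not_le.2 hc'lt)
end
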